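/- Let $(X_n)_{n\ge 0}$ be an irreducible Markov chain on a countable state space $S$, and let $u: S \to \mathbb{N}_{\ge 1}$ be a bounded function. Define stopping times $\sigma_0 = 0$, $\sigma_{n+1} = \sigma_n + u(X_{\sigma_n})$, and the embedded chain $\hat{X}_n = X_{\sigma_n}$. If there exist a lower-bounded function $f: S \to \mathbb{R}$, a constant $\delta > 0$, and a finite set $S_0 \subset S$ such that (i) $\mathbb{E}[f(\hat{X}_1) - f(\hat{X}_0) \mid \hat{X}_0 = y] \le -\delta$ for every $y \in S \setminus S_0$, and (ii) $\mathbb{E}[f(\hat{X}_1) \mid \hat{X}_0 = y] < \infty$ for every $y \in S_0$, then $(X_n)$ is positive recurrent. -/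

import Mathlib

open MeasureTheory Filter Matrix
open scoped Classical

/-- A time-homogeneous Markov chain on a state space `S`, given by its
transition matrix `P` together with the family of path laws `μ y`
(the law of the trajectory started at `y`), determined on cylinder sets. -/
structure MarkovChain (S : Type) [MeasurableSpace S] where
  P : S → S → ℝ
  P_nonneg : ∀ s s', 0 ≤ P s s'
  P_rowsum : ∀ s, HasSum (P s) 1
  μ : S → Measure (ℕ → S)
  isProb : ∀ y, IsProbabilityMeasure (μ y)
  cylinder : ∀ (y : S) (n : ℕ) (path : ℕ → S),
      μ y {ω | ∀ i ≤ n, ω i = path i}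
        = (if path 0 = y then 1 else 0)
            * ∏ i ∈ Finset.range n, ENNReal.ofReal (P (path i) (path (i + 1)))

/-- `n`-step transition probabilities of a transition matrix. -/
noncomputable def nstepFn {S : Type} (P : S → S → ℝ) : ℕ → S → S → ℝ
  | 0 => fun s s' => if s = s' then 1 else 0
  | n + 1 => fun s s' => ∑' t, nstepFn P n s t * P t s'

/-- `n`-step transition probabilities of a Markov chain. -/
noncomputable def nstep {S : Type} [MeasurableSpace S] (M : MarkovChain S) :
    ℕ → S → S → ℝ := nstepFn M.P

/-- Irreducibility: every state is reachable from every state. -/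
def MCIrreducible {S : Type} [MeasurableSpace S] (M : MarkovChain S) : Prop :=
  ∀ s s', ∃ n, 0 < nstep M n s s'

/-- Positive recurrence: every state has finite expected return time
(the expected return time equals `∑_{n≥0} P(no return within the first n steps)`). -/
def PositiveRecurrent {S : Type} [MeasurableSpace S] (M : MarkovChain S) : Prop :=
  ∀ y : S, (∑' n : ℕ, M.μ y {ω | ∀ i, 1 ≤ i → i ≤ n → ω i ≠ y}) ≠ ⊤

/-- Transience: every state is visited finitely often, almost surely. -/
def MCTransient {S : Type} [MeasurableSpace S] (M : MarkovChain S) : Prop :=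
  ∀ x y : S, M.μ x {ω | {n : ℕ | ω n = y}.Infinite} = 0

/-- The sampling times `σ_0 = 0`, `σ_{n+1} = σ_n + u(ω_{σ_n})`. -/
def sigmaT {S : Type} (u : S → ℕ) (ω : ℕ → S) : ℕ → ℕ
  | 0 => 0
  | n + 1 => sigmaT u ω n + u (ω (sigmaT u ω n))

namespace FosterProof
set_option linter.unusedSectionVars false
open MeasureTheory ENNReal

variable {S : Type} [MeasurableSpace S] [MeasurableSingletonClass S] [Countable S]

lemma measSet (A : Set S) : MeasurableSet A := (Set.to_countable A).measurableSet

/-- Shift of a path by `n`. -/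
def shiftP (n : ℕ) (ω : ℕ → S) : ℕ → S := fun i => ω (n + i)

lemma measurable_shiftP (n : ℕ) : Measurable (shiftP (S := S) n) :=
  measurable_pi_lambda _ fun i => measurable_pi_apply (n + i)

/-- Cylinder set: paths agreeing with `p` up to index `n`. -/
def Cyl (n : ℕ) (p : ℕ → S) : Set (ℕ → S) := {ω | ∀ i ≤ n, ω i = p i}

lemma measurableSet_cyl (n : ℕ) (p : ℕ → S) : MeasurableSet (Cyl n p) := by
  have : Cyl n p = ⋂ (i : ℕ) (_ : i ≤ n), (fun ω : ℕ → S => ω i) ⁻¹' {p i} := by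
    ext ω; simp [Cyl]
  rw [this]
  exact MeasurableSet.iInter fun i => MeasurableSet.iInter fun _ =>
    (measurable_pi_apply i) (measSet {p i})

/-- A set of paths determined by the first `n+1` coordinates. -/
def DepOn (n : ℕ) (A : Set (ℕ → S)) : Prop :=
  ∀ ω ω', (∀ i ≤ n, ω i = ω' i) → ω ∈ A → ω' ∈ A

def truncExt (n : ℕ) (q : Fin (n + 1) → S) : ℕ → S :=
  fun i => q ⟨min i n, by omega⟩

lemma truncExt_agree (n : ℕ) (q : Fin (n + 1) → S) (i : ℕ) (hi : i ≤ n) :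
    truncExt n q i = q ⟨i, by omega⟩ := by
  simp [truncExt, Nat.min_eq_left hi]

lemma mem_cyl_truncExt (n : ℕ) (ω : ℕ → S) :
    ω ∈ Cyl n (truncExt n (fun i : Fin (n+1) => ω i)) := by
  intro i hi
  rw [truncExt_agree n _ i hi]

lemma cyl_disjoint (n : ℕ) : Pairwise (Function.onFun Disjoint fun q : Fin (n+1) → S =>
    Cyl n (truncExt n q)) := by
  intro q q' hqq'
  refine Set.disjoint_left.2 fun ω hω hω' => hqq' ?_
  funext i
  have h1 := hω i.1 (by omega)
  have h2 := hω' i.1 (by omega)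
  rw [truncExt_agree n q i.1 (by omega)] at h1
  rw [truncExt_agree n q' i.1 (by omega)] at h2
  have : q ⟨i.1, by omega⟩ = q' ⟨i.1, by omega⟩ := h1 ▸ h2 ▸ rfl
  simpa using this

lemma depOn_union (n : ℕ) (A : Set (ℕ → S)) (hA : DepOn n A) :
    A = ⋃ (q : {q : Fin (n+1) → S // truncExt n q ∈ A}), Cyl n (truncExt n q.1) := by
  ext ω
  constructor
  · intro hω
    have hq : truncExt n (fun i : Fin (n+1) => ω i) ∈ A := by
      refine hA ω _ (fun i hi => ?_) hω
      rw [truncExt_agree n _ i hi]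
    exact Set.mem_iUnion.2 ⟨⟨_, hq⟩, mem_cyl_truncExt n ω⟩
  · intro hω
    obtain ⟨⟨q, hq⟩, hmem⟩ := Set.mem_iUnion.1 hω
    exact hA _ ω (fun i hi => (hmem i hi).symm) hq

lemma DepOn.measurableSet {n : ℕ} {A : Set (ℕ → S)} (hA : DepOn n A) :
    MeasurableSet A := by
  rw [depOn_union n A hA]
  exact MeasurableSet.iUnion fun q => measurableSet_cyl n _

lemma depOn_meas (μ : Measure (ℕ → S)) (n : ℕ) (A : Set (ℕ → S)) (hA : DepOn n A) :
    μ A = ∑' q : {q : Fin (n+1) → S // truncExt n q ∈ A}, μ (Cyl n (truncExt n q.1)) := by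
  conv_lhs => rw [depOn_union n A hA]
  exact measure_iUnion (fun q q' h => cyl_disjoint n (fun hh => h (Subtype.ext hh)))
    (fun q => measurableSet_cyl n _)

end FosterProof
namespace FosterProof
set_option linter.unusedSectionVars false
open MeasureTheory ENNReal
variable {S : Type} [MeasurableSpace S] [MeasurableSingletonClass S] [Countable S]

def cylSystem (S : Type) [MeasurableSpace S] : Set (Set (ℕ → S)) :=
  {C | ∃ n p, C = Cyl n p}

lemma cyl_inter_cyl {n n' : ℕ} (h : n ≤ n') (p p' : ℕ → S) (ω : ℕ → S)
    (hω : ω ∈ Cyl n p) (hω' : ω ∈ Cyl n' p') : Cyl n p ∩ Cyl n' p' = Cyl n' p' := by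
  refine Set.eq_of_subset_of_subset Set.inter_subset_right fun τ hτ => ⟨fun i hi => ?_, hτ⟩
  calc τ i = p' i := hτ i (le_trans hi h)
  _ = ω i := (hω' i (le_trans hi h)).symm
  _ = p i := hω i hi

lemma isPiSystem_cyl : IsPiSystem (cylSystem S) := by
  rintro _ ⟨n, p, rfl⟩ _ ⟨n', p', rfl⟩ hne
  obtain ⟨ω, hω, hω'⟩ := hne
  rcases le_total n n' with h | h
  · exact ⟨n', p', cyl_inter_cyl h p p' ω hω hω'⟩
  · refine ⟨n, p, ?_⟩
    rw [Set.inter_comm]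
    exact cyl_inter_cyl h p' p ω hω' hω

lemma depOn_measurable_gen {n : ℕ} {A : Set (ℕ → S)} (hA : DepOn n A) :
    MeasurableSet[MeasurableSpace.generateFrom (cylSystem S)] A := by
  rw [depOn_union n A hA]
  exact MeasurableSet.iUnion fun q => MeasurableSpace.measurableSet_generateFrom ⟨n, _, rfl⟩

lemma generateFrom_cyl :
    (MeasurableSpace.pi : MeasurableSpace (ℕ → S)) =
      MeasurableSpace.generateFrom (cylSystem S) := by
  apply le_antisymm
  · refine iSup_le fun i => ?_
    rintro s ⟨B, hB, rfl⟩
    exact depOn_measurable_gen (n := i) fun ω ω' h hω => by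
      simpa [← h i le_rfl] using hω
  · exact MeasurableSpace.generateFrom_le (by rintro _ ⟨n, p, rfl⟩; exact measurableSet_cyl n p)

variable (M : MarkovChain S)

lemma cyl_meas (y : S) (n : ℕ) (p : ℕ → S) :
    M.μ y (Cyl n p) = (if p 0 = y then 1 else 0) *
      ∏ i ∈ Finset.range n, ENNReal.ofReal (M.P (p i) (p (i + 1))) := M.cylinder y n p

lemma prob_univ (y : S) : M.μ y Set.univ = 1 := (M.isProb y).measure_univ

lemma zero_coord (y : S) : M.μ y {ω : ℕ → S | ω 0 = y} = 1 := by
  have h : {ω : ℕ → S | ω 0 = y} = Cyl 0 (fun _ => y) := by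
    ext ω
    constructor
    · intro h i hi
      have hz : i = 0 := Nat.le_zero.1 hi
      subst hz
      exact h
    · intro h
      exact h 0 le_rfl
  rw [h, cyl_meas]
  simp

lemma ae0 (y : S) : ∀ᵐ ω ∂ M.μ y, ω 0 = y := by
  have hmeas : MeasurableSet {ω : ℕ → S | ω 0 = y} :=
    DepOn.measurableSet (n := 0) (fun ω ω' h hω => by simpa [← h 0 le_rfl] using hω)
  have := M.isProb y
  rw [ae_iff]
  have hc : M.μ y {ω : ℕ → S | ω 0 = y}ᶜ = 0 := by
    rw [measure_compl hmeas (measure_ne_top _ _), zero_coord, prob_univ, tsub_self]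
  exact hc

lemma lint_coord0 (G : S → ℝ≥0∞) (s : S) : ∫⁻ ω, G (ω 0) ∂ M.μ s = G s := by
  rw [lintegral_congr_ae ((ae0 M s).mono fun ω h => by rw [h])]
  simp [lintegral_const, prob_univ]

lemma key_comp (n m : ℕ) (y s : S) (A : Set (ℕ → S)) (hdep : DepOn n A)
    (hend : ∀ ω ∈ A, ω n = s) (p : ℕ → S) :
    M.μ y (shiftP n ⁻¹' Cyl m p ∩ A) = M.μ y A * M.μ s (Cyl m p) := by
  by_cases hp : p 0 = s
  · -- main case
    have hAs : ∀ (q : {q : Fin (n+1) → S // truncExt n q ∈ A}), truncExt n q.1 n = s := by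
      intro q
      exact hend _ q.2
    -- join path
    set join : {q : Fin (n+1) → S // truncExt n q ∈ A} → ℕ → S :=
      fun q i => if i ≤ n then truncExt n q.1 i else p (i - n) with hjoin
    have hset : ∀ q : {q : Fin (n+1) → S // truncExt n q ∈ A},
        shiftP n ⁻¹' Cyl m p ∩ Cyl n (truncExt n q.1) = Cyl (n + m) (join q) := by
      intro q
      ext ω
      constructor
      · rintro ⟨hD, hC⟩
        intro i hi
        by_cases hin : i ≤ n
        · simp only [hjoin, hin, if_true]
          exact hC i hin
        · have h2 : i - n ≤ m := by omega
          simp only [hjoin]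
          rw [if_neg hin]
          have h4 : ω (n + (i - n)) = p (i - n) := hD (i - n) h2
          rw [(by omega : n + (i - n) = i)] at h4
          exact h4
      · intro hω
        constructor
        · intro i hi
          show ω (n + i) = p i
          rcases Nat.eq_zero_or_pos i with h0 | h0
          · subst h0
            have := hω n (by omega)
            simp only [hjoin, le_refl, if_true, Nat.add_zero] at this ⊢
            rw [this, hAs q, hp]
          · have h5 : join q (n + i) = p i := by
              simp only [hjoin]
              rw [if_neg (by omega : ¬ n + i ≤ n), Nat.add_sub_cancel_left]
            exact (hω (n + i) (by omega)).trans h5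
        · intro i hi
          have := hω i (by omega)
          simpa [hjoin, hi] using this
    have hm : ∀ q : {q : Fin (n+1) → S // truncExt n q ∈ A},
        M.μ y (Cyl (n+m) (join q)) = M.μ y (Cyl n (truncExt n q.1)) * M.μ s (Cyl m p) := by
      intro q
      rw [cyl_meas, cyl_meas, cyl_meas]
      have hj0 : join q 0 = truncExt n q.1 0 := by simp [hjoin]
      rw [Finset.prod_range_add]
      have h1 : ∀ i ∈ Finset.range n,
          ENNReal.ofReal (M.P (join q i) (join q (i+1)))
            = ENNReal.ofReal (M.P (truncExt n q.1 i) (truncExt n q.1 (i+1))) := by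
        intro i hi
        simp only [Finset.mem_range] at hi
        simp [hjoin, (by omega : i ≤ n), (by omega : i + 1 ≤ n)]
      have h2 : ∀ i ∈ Finset.range m,
          ENNReal.ofReal (M.P (join q (n+i)) (join q (n+i+1)))
            = ENNReal.ofReal (M.P (p i) (p (i+1))) := by
        intro i hi
        have hji : join q (n + i) = p i := by
          rcases Nat.eq_zero_or_pos i with h0 | h0
          · subst h0
            simp only [hjoin, Nat.add_zero, le_refl, if_true]
            rw [hAs q, hp]
          · simp only [hjoin]
            rw [if_neg (by omega : ¬ n + i ≤ n), Nat.add_sub_cancel_left]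
        have hji1 : join q (n + i + 1) = p (i + 1) := by
          simp only [hjoin]
          rw [if_neg (by omega : ¬ n + i + 1 ≤ n)]
          congr 1
          omega
        rw [hji, hji1]
      rw [Finset.prod_congr rfl h1, Finset.prod_congr rfl h2, hj0, if_pos hp]
      ring
    -- now decompose
    have hAeq := depOn_union n A hdep
    have hiU : shiftP n ⁻¹' Cyl m p ∩ A
        = ⋃ (q : {q : Fin (n+1) → S // truncExt n q ∈ A}),
            (shiftP n ⁻¹' Cyl m p ∩ Cyl n (truncExt n q.1)) := by
      conv_lhs => rw [hAeq]
      rw [Set.inter_iUnion]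
    rw [hiU, measure_iUnion, depOn_meas (M.μ y) n A hdep, ← ENNReal.tsum_mul_right]
    · congr 1
      funext q
      rw [hset q, hm q]
    · intro q q' hqq'
      have := cyl_disjoint n (fun hh : q.1 = q'.1 => hqq' (Subtype.ext hh))
      exact Disjoint.mono Set.inter_subset_right Set.inter_subset_right this
    · intro q
      exact MeasurableSet.inter ((measurableSet_cyl m p).preimage (measurable_shiftP n))
        (measurableSet_cyl n _)
  · have h0 : M.μ s (Cyl m p) = 0 := by
      rw [cyl_meas, if_neg hp, zero_mul]
    have hsub : shiftP n ⁻¹' Cyl m p ∩ A = ∅ := by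
      ext ω
      simp only [Set.mem_inter_iff, Set.mem_empty_iff_false, iff_false, not_and]
      intro hD hA
      apply hp
      have h1 : ω n = p 0 := by
        have := hD 0 (Nat.zero_le m)
        simpa [shiftP] using this
      rw [← h1]
      exact hend ω hA
    rw [hsub, h0, mul_zero, measure_empty]

theorem markov (n : ℕ) (y s : S) (A : Set (ℕ → S)) (hdep : DepOn n A)
    (hend : ∀ ω ∈ A, ω n = s) :
    Measure.map (shiftP n) ((M.μ y).restrict A) = M.μ y A • M.μ s := by
  have hAm : MeasurableSet A := hdep.measurableSet
  have hfin : IsFiniteMeasure (Measure.map (shiftP n) ((M.μ y).restrict A)) := by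
    constructor
    rw [Measure.map_apply (measurable_shiftP n) MeasurableSet.univ]
    simp only [Set.preimage_univ]
    rw [Measure.restrict_apply MeasurableSet.univ]
    have := M.isProb y
    exact lt_of_le_of_lt (measure_mono (Set.subset_univ _)) (by simp [prob_univ])
  refine ext_of_generate_finite (cylSystem S) generateFrom_cyl isPiSystem_cyl ?_ ?_
  · rintro _ ⟨mm, p, rfl⟩
    rw [Measure.map_apply (measurable_shiftP n) (measurableSet_cyl mm p),
      Measure.restrict_apply ((measurableSet_cyl mm p).preimage (measurable_shiftP n)),
      key_comp M n mm y s A hdep hend p]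
    simp [Measure.smul_apply]
  · rw [Measure.map_apply (measurable_shiftP n) MeasurableSet.univ]
    simp only [Set.preimage_univ]
    rw [Measure.restrict_apply MeasurableSet.univ]
    simp [Measure.smul_apply, prob_univ]

lemma markov_lintegral (n : ℕ) (y s : S) (A : Set (ℕ → S)) (hdep : DepOn n A)
    (hend : ∀ ω ∈ A, ω n = s) (H : (ℕ → S) → ℝ≥0∞) (hH : Measurable H) :
    ∫⁻ ω in A, H (shiftP n ω) ∂ M.μ y = M.μ y A * ∫⁻ ω', H ω' ∂ M.μ s := by
  rw [← lintegral_map hH (measurable_shiftP n), markov M n y s A hdep hend,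
    lintegral_smul_measure, smul_eq_mul]

lemma markov_set (n : ℕ) (y s : S) (A : Set (ℕ → S)) (hdep : DepOn n A)
    (hend : ∀ ω ∈ A, ω n = s) (B : Set (ℕ → S)) (hB : MeasurableSet B) :
    M.μ y (shiftP n ⁻¹' B ∩ A) = M.μ y A * M.μ s B := by
  have := markov M n y s A hdep hend
  have h1 : Measure.map (shiftP n) ((M.μ y).restrict A) B = M.μ y A * M.μ s B := by
    rw [this]; simp [Measure.smul_apply]
  rw [← h1, Measure.map_apply (measurable_shiftP n) hB,
    Measure.restrict_apply (hB.preimage (measurable_shiftP n))]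

end FosterProof
namespace FosterProof
set_option linter.unusedSectionVars false
open MeasureTheory ENNReal
variable {S : Type} [MeasurableSpace S] [MeasurableSingletonClass S] [Countable S]
variable (M : MarkovChain S)

/-- Master decomposition lemma (strong Markov property at an adapted time). -/
lemma MD (y : S) (A : Set (ℕ → S)) (T : (ℕ → S) → ℕ)
    (hadapt : ∀ ω ω', (∀ i ≤ T ω, ω i = ω' i) → ω ∈ A → ω' ∈ A ∧ T ω' = T ω)
    (H : (ℕ → S) → ℝ≥0∞) (hH : Measurable H) :
    ∫⁻ ω in A, H (shiftP (T ω) ω) ∂ M.μ y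
      = ∑' q : ℕ × S, M.μ y (A ∩ {ω | T ω = q.1 ∧ ω q.1 = q.2}) * ∫⁻ ω', H ω' ∂ M.μ q.2 := by
  set pc : ℕ × S → Set (ℕ → S) := fun q => A ∩ {ω | T ω = q.1 ∧ ω q.1 = q.2} with hpc
  have hdep : ∀ q : ℕ × S, DepOn q.1 (pc q) := by
    rintro q ω ω' h ⟨hA, hT, hc⟩
    have h' : ∀ i ≤ T ω, ω i = ω' i := by rw [hT]; exact h
    obtain ⟨hA', hT'⟩ := hadapt ω ω' h' hA
    exact ⟨hA', hT'.trans hT, by rw [← h q.1 le_rfl, hc]⟩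
  have hmeas : ∀ q, MeasurableSet (pc q) := fun q => (hdep q).measurableSet
  have hdisj : Pairwise (Function.onFun Disjoint pc) := by
    intro q q' hqq'
    refine Set.disjoint_left.2 fun ω hω hω' => hqq' ?_
    have h1 := hω.2.1; have h2 := hω'.2.1
    have hq1 : q.1 = q'.1 := h1 ▸ h2 ▸ rfl
    have hq2 : q.2 = q'.2 := by
      rw [← hω.2.2, ← hω'.2.2, hq1]
    exact Prod.ext hq1 hq2
  have huniv : A = ⋃ q, pc q := by
    ext ω
    constructor
    · intro hω
      exact Set.mem_iUnion.2 ⟨(T ω, ω (T ω)), hω, rfl, rfl⟩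
    · rintro hω
      obtain ⟨q, hq⟩ := Set.mem_iUnion.1 hω
      exact hq.1
  calc ∫⁻ ω in A, H (shiftP (T ω) ω) ∂ M.μ y
      = ∫⁻ ω, H (shiftP (T ω) ω) ∂ (Measure.sum fun q => (M.μ y).restrict (pc q)) := by
        rw [← Measure.restrict_iUnion hdisj hmeas, ← huniv]
    _ = ∑' q : ℕ × S, ∫⁻ ω in pc q, H (shiftP (T ω) ω) ∂ M.μ y :=
        lintegral_sum_measure _ _
    _ = ∑' q : ℕ × S, M.μ y (pc q) * ∫⁻ ω', H ω' ∂ M.μ q.2 := by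
        congr 1
        funext q
        rw [setLIntegral_congr_fun (hmeas q)
          (fun ω hω => by rw [hω.2.1])]
        exact markov_lintegral M q.1 y q.2 (pc q) (hdep q) (fun ω hω => hω.2.2) H hH

lemma MD_meas (y : S) (A : Set (ℕ → S)) (T : (ℕ → S) → ℕ)
    (hadapt : ∀ ω ω', (∀ i ≤ T ω, ω i = ω' i) → ω ∈ A → ω' ∈ A ∧ T ω' = T ω) :
    M.μ y A = ∑' q : ℕ × S, M.μ y (A ∩ {ω | T ω = q.1 ∧ ω q.1 = q.2}) := by
  have h := MD M y A T hadapt (fun _ => 1) measurable_const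
  simpa [lintegral_one, prob_univ, setLIntegral_one] using h

/-! ### sigmaT lemmas -/

variable {u : S → ℕ}

def emb (u : S → ℕ) (ω : ℕ → S) (k : ℕ) : S := ω (sigmaT u ω k)

lemma sigmaT_zero (ω : ℕ → S) : sigmaT u ω 0 = 0 := rfl

lemma sigmaT_succ (ω : ℕ → S) (k : ℕ) :
    sigmaT u ω (k + 1) = sigmaT u ω k + u (ω (sigmaT u ω k)) := rfl

lemma sigmaT_mono (ω : ℕ → S) {k k' : ℕ} (h : k ≤ k') : sigmaT u ω k ≤ sigmaT u ω k' := by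
  induction k' with
  | zero => simpa [Nat.le_zero.1 h]
  | succ n ih =>
    rcases Nat.lt_or_ge k (n+1) with hlt | hge
    · exact le_trans (ih (by omega)) (Nat.le_add_right _ _)
    · have : k = n + 1 := by omega
      subst this; exact le_rfl

lemma sigmaT_le_mul {U : ℕ} (huU : ∀ y, u y ≤ U) (ω : ℕ → S) (k : ℕ) :
    sigmaT u ω k ≤ U * k := by
  induction k with
  | zero => simp [sigmaT_zero]
  | succ n ih =>
    rw [sigmaT_succ]
    have := huU (ω (sigmaT u ω n))
    calc sigmaT u ω n + u (ω (sigmaT u ω n)) ≤ U * n + U := by omega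
    _ = U * (n + 1) := by ring

lemma sigmaT_add_ge (hu1 : ∀ y, 1 ≤ u y) (ω : ℕ → S) (k r : ℕ) :
    sigmaT u ω k + r ≤ sigmaT u ω (k + r) := by
  induction r with
  | zero => simp
  | succ n ih =>
    rw [show k + (n+1) = (k+n) + 1 by ring, sigmaT_succ]
    have := hu1 (ω (sigmaT u ω (k+n)))
    omega

lemma sigmaT_det {n : ℕ} {ω ω' : ℕ → S} (h : ∀ i ≤ n, ω i = ω' i) :
    ∀ k, sigmaT u ω k ≤ n → sigmaT u ω' k = sigmaT u ω k := by
  intro k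
  induction k with
  | zero => intro _; rfl
  | succ m ih =>
    intro hk
    have h1 : sigmaT u ω m ≤ n := le_trans (sigmaT_mono ω (Nat.le_succ m)) hk
    have h2 := ih h1
    rw [sigmaT_succ, sigmaT_succ, h2, ← h (sigmaT u ω m) h1]

lemma emb_det {n : ℕ} {ω ω' : ℕ → S} (h : ∀ i ≤ n, ω i = ω' i)
    {k : ℕ} (hk : sigmaT u ω k ≤ n) : emb u ω' k = emb u ω k := by
  rw [emb, emb, sigmaT_det h k hk, ← h _ hk]

lemma sigmaT_shift (ω : ℕ → S) (k r : ℕ) :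
    sigmaT u ω (k + r) = sigmaT u ω k + sigmaT u (shiftP (sigmaT u ω k) ω) r := by
  induction r with
  | zero => simp [sigmaT_zero]
  | succ n ih =>
    rw [show k + (n+1) = (k+n)+1 by ring, sigmaT_succ, ih, sigmaT_succ]
    have : ω (sigmaT u ω k + sigmaT u (shiftP (sigmaT u ω k) ω) n)
        = shiftP (sigmaT u ω k) ω (sigmaT u (shiftP (sigmaT u ω k) ω) n) := rfl
    rw [this]
    ring

lemma emb_shift (ω : ℕ → S) (k r : ℕ) :
    emb u ω (k + r) = emb u (shiftP (sigmaT u ω k) ω) r := by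
  rw [emb, emb, sigmaT_shift]
  rfl

/-! ### marginal laws -/

lemma Ple1 (t s : S) : M.P t s ≤ 1 :=
  le_hasSum (M.P_rowsum t) s (fun _ _ => M.P_nonneg _ _)

lemma meas_inter0 (t : S) (B : Set (ℕ → S)) :
    M.μ t (B ∩ {ω | ω 0 = t}) = M.μ t B := by
  apply measure_congr
  have h1 : {ω : ℕ → S | ω 0 = t} =ᵐ[M.μ t] Set.univ := by
    rw [Filter.eventuallyEq_univ]
    exact (ae0 M t).mono fun ω h => h
  have := (Filter.EventuallyEq.refl (ae (M.μ t)) B).inter h1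
  simpa using this

lemma one_step (t s : S) : M.μ t {ω | ω 1 = s} = ENNReal.ofReal (M.P t s) := by
  rw [← meas_inter0 M t {ω | ω 1 = s}]
  have h : {ω : ℕ → S | ω 1 = s} ∩ {ω | ω 0 = t}
      = Cyl 1 (fun i => if i = 0 then t else s) := by
    ext ω
    constructor
    · rintro ⟨h1, h0⟩ i hi
      interval_cases i
      · simpa using h0
      · simpa using h1
    · intro h
      constructor
      · simpa using h 1 le_rfl
      · simpa using h 0 (by omega)
  rw [h, cyl_meas]
  simp

lemma marg_partition (y : S) (n : ℕ) (B : Set (ℕ → S)) (hB : MeasurableSet B) :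
    M.μ y B = ∑' t : S, M.μ y (B ∩ {ω | ω n = t}) := by
  have hmeas : ∀ t : S, MeasurableSet (B ∩ {ω : ℕ → S | ω n = t}) := by
    intro t
    exact hB.inter (DepOn.measurableSet (n := n)
      (fun ω ω' h hω => by simpa [← h n le_rfl] using hω))
  have huniv : B = ⋃ t : S, B ∩ {ω | ω n = t} := by
    ext ω
    simp only [Set.mem_iUnion, Set.mem_inter_iff, Set.mem_setOf_eq]
    exact ⟨fun h => ⟨ω n, h, rfl⟩, fun ⟨t, h, _⟩ => h⟩
  conv_lhs => rw [huniv]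
  refine measure_iUnion ?_ hmeas
  intro t t' htt'
  refine Set.disjoint_left.2 fun ω hω hω' => htt' ?_
  rw [← hω.2, ← hω'.2]

lemma depOn_coord (n : ℕ) (t : S) : DepOn n {ω : ℕ → S | ω n = t} :=
  fun ω ω' h hω => by simpa [← h n le_rfl] using hω

lemma nstep_pack (n : ℕ) (y : S) :
    (∀ s, 0 ≤ nstep M n y s) ∧ Summable (nstep M n y) ∧
      (∀ s, M.μ y {ω | ω n = s} = ENNReal.ofReal (nstep M n y s)) := by
  induction n with
  | zero =>
    have hval : ∀ s, nstep M 0 y s = if y = s then 1 else 0 := fun s => rfl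
    refine ⟨fun s => by rw [hval]; positivity, ?_, ?_⟩
    · apply summable_of_ne_finset_zero (s := {y})
      intro s hs
      rw [hval, if_neg]
      simpa using fun h => hs (by simp [h])
    · intro s
      rcases eq_or_ne s y with rfl | hsy
      · rw [show {ω : ℕ → S | ω 0 = s} = {ω : ℕ → S | ω 0 = s} from rfl]
        rw [zero_coord, hval, if_pos rfl]
        simp
      · have h1 : M.μ y ({ω : ℕ → S | ω 0 = s}) = 0 := by
          have hsub : {ω : ℕ → S | ω 0 = s} ⊆ {ω : ℕ → S | ω 0 = y}ᶜ := by
            intro ω h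
            simp only [Set.mem_compl_iff, Set.mem_setOf_eq] at *
            rw [h]; exact hsy
          have := M.isProb y
          have hc : M.μ y {ω : ℕ → S | ω 0 = y}ᶜ = 0 := by
            rw [measure_compl (depOn_coord 0 y).measurableSet (measure_ne_top _ _),
              zero_coord, prob_univ, tsub_self]
          exact le_antisymm (le_trans (measure_mono hsub) hc.le) zero_le
        rw [h1, hval, if_neg (fun h => hsy h.symm)]
        simp
  | succ n ih =>
    obtain ⟨hnn, hsumm, hmarg⟩ := ih
    have hstep : ∀ s, M.μ y {ω | ω (n+1) = s}
        = ∑' t : S, ENNReal.ofReal (nstep M n y t * M.P t s) := by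
      intro s
      rw [marg_partition M y n _ (depOn_coord (n+1) s).measurableSet]
      congr 1
      funext t
      have hset : {ω : ℕ → S | ω (n+1) = s} ∩ {ω | ω n = t}
          = shiftP n ⁻¹' {ω' | ω' 1 = s} ∩ {ω | ω n = t} := rfl
      rw [hset, markov_set M n y t _ (depOn_coord n t) (fun ω hω => hω)
        _ (depOn_coord 1 s).measurableSet, hmarg t, one_step,
        ← ENNReal.ofReal_mul (hnn t)]
    have hsum2 : ∀ s, Summable (fun t => nstep M n y t * M.P t s) := by
      intro s
      refine Summable.of_nonneg_of_le (fun t => mul_nonneg (hnn t) (M.P_nonneg t s))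
        (fun t => ?_) hsumm
      exact mul_le_of_le_one_right (hnn t) (Ple1 M t s)
    have hval : ∀ s, nstep M (n+1) y s = ∑' t, nstep M n y t * M.P t s := fun s => rfl
    have hmarg2 : ∀ s, M.μ y {ω | ω (n+1) = s} = ENNReal.ofReal (nstep M (n+1) y s) := by
      intro s
      rw [hstep s, hval s, ENNReal.ofReal_tsum_of_nonneg
        (fun t => mul_nonneg (hnn t) (M.P_nonneg t s)) (hsum2 s)]
    have hnn2 : ∀ s, 0 ≤ nstep M (n+1) y s := by
      intro s
      rw [hval]
      exact tsum_nonneg (fun t => mul_nonneg (hnn t) (M.P_nonneg t s))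
    refine ⟨hnn2, ?_, hmarg2⟩
    · have htot : ∑' s : S, M.μ y {ω | ω (n+1) = s} = 1 := by
        have := marg_partition M y (n+1) Set.univ MeasurableSet.univ
        simp only [Set.univ_inter] at this
        rw [← this, prob_univ]
      have hne : ∑' s : S, ENNReal.ofReal (nstep M (n+1) y s) ≠ ⊤ := by
        rw [← tsum_congr hmarg2, htot]
        exact one_ne_top
      have := ENNReal.summable_toReal hne
      refine this.congr fun s => ?_
      rw [ENNReal.toReal_ofReal (hnn2 s)]

lemma marg (n : ℕ) (y s : S) :
    M.μ y {ω | ω n = s} = ENNReal.ofReal (nstep M n y s) := (nstep_pack M n y).2.2 s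

lemma exists_pos_hit (hirr : MCIrreducible M) (s y : S) :
    ∃ k, 1 ≤ k ∧ 0 < M.μ s {ω | ω k = y} := by
  rcases eq_or_ne s y with rfl | hsy
  · -- s = y : need k ≥ 1
    have hex : ∃ t, 0 < M.P s t := by
      by_contra hall
      push_neg at hall
      have : ∀ t, M.P s t = 0 := fun t => le_antisymm (hall t) (M.P_nonneg s t)
      have h0 : HasSum (M.P s) 0 := by
        rw [show M.P s = fun _ => (0:ℝ) from funext this]
        exact hasSum_zero
      exact one_ne_zero ((M.P_rowsum s).unique h0)
    obtain ⟨t, ht⟩ := hex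
    rcases eq_or_ne t s with rfl | hts
    · exact ⟨1, le_rfl, by rw [one_step]; exact ENNReal.ofReal_pos.2 ht⟩
    · obtain ⟨n', hn'⟩ := hirr t s
      refine ⟨1 + n', by omega, ?_⟩
      have hsub : shiftP 1 ⁻¹' {ω' : ℕ → S | ω' n' = s} ∩ {ω : ℕ → S | ω 1 = t}
          ⊆ {ω : ℕ → S | ω (1 + n') = s} := fun ω hω => hω.1
      refine lt_of_lt_of_le ?_ (measure_mono hsub)
      rw [markov_set M 1 s t _ (depOn_coord 1 t) (fun ω hω => hω)
        _ (depOn_coord n' s).measurableSet, one_step, marg]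
      exact ENNReal.mul_pos (ENNReal.ofReal_pos.2 ht).ne'
        (ENNReal.ofReal_pos.2 hn').ne'
  · obtain ⟨n, hn⟩ := hirr s y
    have hn1 : 1 ≤ n := by
      rcases Nat.eq_zero_or_pos n with rfl | h
      · exfalso
        have : nstep M 0 s y = 0 := by
          show (if s = y then (1:ℝ) else 0) = 0
          rw [if_neg hsy]
        rw [this] at hn
        exact lt_irrefl _ hn
      · exact h
    exact ⟨n, hn1, by rw [marg]; exact ENNReal.ofReal_pos.2 hn⟩

end FosterProof
namespace FosterProof
set_option linter.unusedSectionVars false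
open MeasureTheory ENNReal
variable {S : Type} [MeasurableSpace S] [MeasurableSingletonClass S] [Countable S]
variable (M : MarkovChain S) (u : S → ℕ) (S0 : Set S) (G : S → ℝ≥0∞) (δ' : ℝ≥0∞)

/-- Embedded chain avoids `S0` through (strictly below) index `N`. -/
def RR (u : S → ℕ) (S0 : Set S) (N : ℕ) : Set (ℕ → S) := {ω | ∀ j < N, emb u ω j ∉ S0}

lemma RR_zero : RR u S0 0 = Set.univ := by
  ext ω; simp [RR]

lemma RR_mono {N N' : ℕ} (h : N ≤ N') : RR u S0 N' ⊆ RR u S0 N :=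
  fun ω hω j hj => hω j (lt_of_lt_of_le hj h)

lemma measurable_sigmaT (N : ℕ) : Measurable (fun ω : ℕ → S => sigmaT u ω N) := by
  apply measurable_to_countable'
  intro τ
  refine DepOn.measurableSet (n := τ) fun ω ω' h hω => ?_
  have hmem : sigmaT u ω N = τ := hω
  have h2 := sigmaT_det (u := u) h N (le_of_eq hmem)
  show sigmaT u ω' N = τ
  rw [h2, hmem]

lemma measurable_emb (k : ℕ) : Measurable (fun ω : ℕ → S => emb u ω k) := by
  apply measurable_to_countable'
  intro s
  have : (fun ω : ℕ → S => emb u ω k) ⁻¹' {s}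
      = ⋃ τ : ℕ, {ω | sigmaT u ω k = τ} ∩ {ω | ω τ = s} := by
    ext ω
    constructor
    · intro h
      exact Set.mem_iUnion.2 ⟨sigmaT u ω k, rfl, h⟩
    · intro h
      obtain ⟨τ, h1, h2⟩ := Set.mem_iUnion.1 h
      show emb u ω k = s
      show ω (sigmaT u ω k) = s
      rw [show sigmaT u ω k = τ from h1]
      exact h2
  rw [this]
  exact MeasurableSet.iUnion fun τ =>
    ((measurable_sigmaT u k) (MeasurableSet.singleton τ)).inter
      (depOn_coord τ s).measurableSet

lemma measurable_RR (N : ℕ) : MeasurableSet (RR u S0 N) := by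
  have : RR u S0 N = ⋂ (j : ℕ) (_ : j < N), (fun ω => emb u ω j) ⁻¹' S0ᶜ := by
    ext ω; simp [RR]
  rw [this]
  exact MeasurableSet.iInter fun j => MeasurableSet.iInter fun _ =>
    (measurable_emb u j) (measSet S0ᶜ)

lemma RR_adapted (N : ℕ) : ∀ ω ω', (∀ i ≤ sigmaT u ω N, ω i = ω' i) →
    ω ∈ RR u S0 (N+1) → ω' ∈ RR u S0 (N+1) ∧ sigmaT u ω' N = sigmaT u ω N := by
  intro ω ω' h hω
  refine ⟨fun j hj => ?_, sigmaT_det h N le_rfl⟩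
  have hσ : sigmaT u ω j ≤ sigmaT u ω N := sigmaT_mono ω (by omega)
  rw [emb_det h hσ]
  exact hω j hj

lemma univ_adapted (N : ℕ) : ∀ ω ω' : ℕ → S, (∀ i ≤ sigmaT u ω N, ω i = ω' i) →
    ω ∈ (Set.univ : Set (ℕ → S)) →
      ω' ∈ (Set.univ : Set (ℕ → S)) ∧ sigmaT u ω' N = sigmaT u ω N :=
  fun ω ω' h _ => ⟨trivial, sigmaT_det h N le_rfl⟩

lemma lint_emb_u (t : S) : ∫⁻ ω', G (ω' (u (ω' 0))) ∂ M.μ t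
    = ∫⁻ ω', G (ω' (u t)) ∂ M.μ t := by
  refine lintegral_congr_ae ((ae0 M t).mono fun ω h => ?_)
  show G (ω (u (ω 0))) = G (ω (u t))
  rw [h]

lemma measurable_G_comp (T : (ℕ → S) → ℕ) (hT : Measurable T) :
    Measurable (fun ω : ℕ → S => G (ω (T ω))) := by
  have h1 : Measurable (fun ω : ℕ → S => ω (T ω)) := by
    apply measurable_to_countable'
    intro s
    have : (fun ω : ℕ → S => ω (T ω)) ⁻¹' {s}
        = ⋃ τ : ℕ, (T ⁻¹' {τ}) ∩ {ω | ω τ = s} := by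
      ext ω
      simp only [Set.mem_preimage, Set.mem_singleton_iff, Set.mem_iUnion, Set.mem_inter_iff,
        Set.mem_setOf_eq]
      exact ⟨fun h => ⟨T ω, rfl, h⟩, fun ⟨τ, h1, h2⟩ => by rw [h1]; exact h2⟩
    rw [this]
    exact MeasurableSet.iUnion fun τ =>
      (hT (MeasurableSet.singleton τ)).inter (depOn_coord τ s).measurableSet
  exact (measurable_of_countable G).comp h1

lemma measurable_H1 : Measurable (fun ω' : ℕ → S => G (ω' (u (ω' 0)))) := by
  apply measurable_G_comp
  exact (measurable_of_countable u).comp (measurable_pi_apply 0)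

lemma measurable_H0 : Measurable (fun ω' : ℕ → S => G (ω' 0)) :=
  measurable_G_comp G (fun _ => 0) measurable_const

/-- The key one-step decomposition inequality. -/
lemma foster_step (hG : ∀ s, G s ≠ ⊤)
    (HK1 : ∀ t, t ∉ S0 → (∫⁻ ω, G (ω (u t)) ∂ M.μ t) + δ' ≤ G t)
    (y : S) (N : ℕ) :
    δ' * M.μ y (RR u S0 (N+1)) + ∫⁻ ω in RR u S0 (N+1), G (emb u ω (N+1)) ∂ M.μ y
      ≤ ∫⁻ ω in RR u S0 (N+1), G (emb u ω N) ∂ M.μ y := by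
  set A := RR u S0 (N+1) with hA
  set T : (ℕ → S) → ℕ := fun ω => sigmaT u ω N with hT
  have hadapt := RR_adapted u S0 N
  have hMD1 := MD M y A T hadapt _ (measurable_H1 u G)
  have hMD0 := MD M y A T hadapt _ (measurable_H0 G)
  have hMDm := MD_meas M y A T hadapt
  -- identify LHS integrals
  have hid1 : ∫⁻ ω in A, G (shiftP (T ω) ω ((u (shiftP (T ω) ω 0)))) ∂ M.μ y
      = ∫⁻ ω in A, G (emb u ω (N+1)) ∂ M.μ y := by
    apply lintegral_congr
    intro ω
    have : shiftP (T ω) ω (u (shiftP (T ω) ω 0)) = emb u ω (N+1) := by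
      show ω (sigmaT u ω N + u (ω (sigmaT u ω N + 0))) = ω (sigmaT u ω (N+1))
      rw [Nat.add_zero, sigmaT_succ]
    rw [this]
  have hid0 : ∫⁻ ω in A, G (shiftP (T ω) ω 0) ∂ M.μ y
      = ∫⁻ ω in A, G (emb u ω N) ∂ M.μ y := by
    apply lintegral_congr
    intro ω
    have : shiftP (T ω) ω 0 = emb u ω N := by
      show ω (sigmaT u ω N + 0) = ω (sigmaT u ω N)
      rw [Nat.add_zero]
    rw [this]
  rw [hid1] at hMD1
  rw [hid0] at hMD0
  -- per-piece inequality
  have hpiece : ∀ q : ℕ × S,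
      M.μ y (A ∩ {ω | T ω = q.1 ∧ ω q.1 = q.2}) * (∫⁻ ω', G (ω' (u (ω' 0))) ∂ M.μ q.2)
        + M.μ y (A ∩ {ω | T ω = q.1 ∧ ω q.1 = q.2}) * δ'
      ≤ M.μ y (A ∩ {ω | T ω = q.1 ∧ ω q.1 = q.2}) * (∫⁻ ω', G (ω' 0) ∂ M.μ q.2) := by
    intro q
    by_cases hq : q.2 ∈ S0
    · have hempty : A ∩ {ω | T ω = q.1 ∧ ω q.1 = q.2} = ∅ := by
        ext ω
        simp only [Set.mem_inter_iff, Set.mem_setOf_eq, Set.mem_empty_iff_false, iff_false,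
          not_and]
        intro hωA hT1 hT2
        have hmem : ∀ j < N + 1, emb u ω j ∉ S0 := hωA
        have heq : emb u ω N = q.2 := by
          show ω (sigmaT u ω N) = q.2
          rw [show sigmaT u ω N = T ω from rfl, hT1, hT2]
        exact hmem N (Nat.lt_succ_self N) (by rw [heq]; exact hq)
      rw [hempty]
      simp
    · have h1 : (∫⁻ ω', G (ω' (u (ω' 0))) ∂ M.μ q.2) + δ' ≤ ∫⁻ ω', G (ω' 0) ∂ M.μ q.2 := by
        rw [lint_emb_u M u G q.2, lint_coord0 M G q.2]
        exact HK1 q.2 hq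
      calc M.μ y _ * (∫⁻ ω', G (ω' (u (ω' 0))) ∂ M.μ q.2) + M.μ y _ * δ'
          = M.μ y (A ∩ {ω | T ω = q.1 ∧ ω q.1 = q.2})
              * ((∫⁻ ω', G (ω' (u (ω' 0))) ∂ M.μ q.2) + δ') := by rw [mul_add]
        _ ≤ _ := mul_le_mul_right h1 _
  calc δ' * M.μ y A + ∫⁻ ω in A, G (emb u ω (N+1)) ∂ M.μ y
      = ∑' q : ℕ × S, (M.μ y (A ∩ {ω | T ω = q.1 ∧ ω q.1 = q.2})
          * (∫⁻ ω', G (ω' (u (ω' 0))) ∂ M.μ q.2)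
          + M.μ y (A ∩ {ω | T ω = q.1 ∧ ω q.1 = q.2}) * δ') := by
        rw [ENNReal.tsum_add, ← hMD1, ENNReal.tsum_mul_right, ← hMDm, add_comm,
          mul_comm δ' _]
    _ ≤ ∑' q : ℕ × S, M.μ y (A ∩ {ω | T ω = q.1 ∧ ω q.1 = q.2})
          * (∫⁻ ω', G (ω' 0) ∂ M.μ q.2) := ENNReal.tsum_le_tsum hpiece
    _ = ∫⁻ ω in A, G (emb u ω N) ∂ M.μ y := hMD0.symm

end FosterProof
namespace FosterProof
set_option linter.unusedSectionVars false
open MeasureTheory ENNReal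
variable {S : Type} [MeasurableSpace S] [MeasurableSingletonClass S] [Countable S]
variable (M : MarkovChain S) (u : S → ℕ) (S0 : Set S) (G : S → ℝ≥0∞) (δ' : ℝ≥0∞)

lemma foster_claim (hG : ∀ s, G s ≠ ⊤)
    (HK1 : ∀ t, t ∉ S0 → (∫⁻ ω, G (ω (u t)) ∂ M.μ t) + δ' ≤ G t) (y : S) :
    ∀ N, δ' * (∑ k ∈ Finset.range N, M.μ y (RR u S0 (k+1)))
      + ∫⁻ ω in RR u S0 N, G (emb u ω N) ∂ M.μ y ≤ G y := by
  intro N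
  induction N with
  | zero =>
    rw [RR_zero, Finset.range_zero, Finset.sum_empty, mul_zero, zero_add,
      Measure.restrict_univ]
    exact le_of_eq (lint_coord0 M G y)
  | succ N ih =>
    have hstep := foster_step M u S0 G δ' hG HK1 y N
    calc δ' * (∑ k ∈ Finset.range (N+1), M.μ y (RR u S0 (k+1)))
          + ∫⁻ ω in RR u S0 (N+1), G (emb u ω (N+1)) ∂ M.μ y
        = δ' * (∑ k ∈ Finset.range N, M.μ y (RR u S0 (k+1)))
          + (δ' * M.μ y (RR u S0 (N+1))
            + ∫⁻ ω in RR u S0 (N+1), G (emb u ω (N+1)) ∂ M.μ y) := by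
          rw [Finset.sum_range_succ, mul_add]
          ring
      _ ≤ δ' * (∑ k ∈ Finset.range N, M.μ y (RR u S0 (k+1)))
          + ∫⁻ ω in RR u S0 (N+1), G (emb u ω N) ∂ M.μ y := add_le_add_right hstep _
      _ ≤ δ' * (∑ k ∈ Finset.range N, M.μ y (RR u S0 (k+1)))
          + ∫⁻ ω in RR u S0 N, G (emb u ω N) ∂ M.μ y :=
            add_le_add_right (lintegral_mono_set (RR_mono u S0 (Nat.le_succ N))) _
      _ ≤ G y := ih

lemma TL_bound (hG : ∀ s, G s ≠ ⊤)
    (HK1 : ∀ t, t ∉ S0 → (∫⁻ ω, G (ω (u t)) ∂ M.μ t) + δ' ≤ G t)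
    (hδ0 : δ' ≠ 0) (hδt : δ' ≠ ⊤) (y : S) :
    ∑' k : ℕ, M.μ y (RR u S0 (k+1)) ≤ G y / δ' := by
  rw [ENNReal.le_div_iff_mul_le (Or.inl hδ0) (Or.inl hδt), mul_comm]
  rw [ENNReal.tsum_eq_iSup_nat, ENNReal.mul_iSup]
  refine iSup_le fun N => ?_
  exact le_trans le_self_add (foster_claim M u S0 G δ' hG HK1 y N)

lemma G_iter (hG : ∀ s, G s ≠ ⊤)
    (HK1w : ∀ t, t ∉ S0 → (∫⁻ ω, G (ω (u t)) ∂ M.μ t) ≤ G t)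
    (C0 : ℝ≥0∞) (HC0 : ∀ t, t ∈ S0 → (∫⁻ ω, G (ω (u t)) ∂ M.μ t) ≤ C0)
    (s : S) : ∀ r : ℕ, ∫⁻ ω, G (emb u ω r) ∂ M.μ s ≤ G s + r * C0 := by
  intro r
  induction r with
  | zero =>
    rw [show ∫⁻ ω, G (emb u ω 0) ∂ M.μ s = G s from lint_coord0 M G s]
    simp
  | succ r ih =>
    set T : (ℕ → S) → ℕ := fun ω => sigmaT u ω r with hTdef
    have hMD1 := MD M s Set.univ T (univ_adapted u r) _ (measurable_H1 u G)
    have hMD0 := MD M s Set.univ T (univ_adapted u r) _ (measurable_H0 G)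
    have hMDm := MD_meas M s Set.univ T (univ_adapted u r)
    rw [Measure.restrict_univ] at hMD1 hMD0
    have hid1 : ∫⁻ ω, G (shiftP (T ω) ω (u (shiftP (T ω) ω 0))) ∂ M.μ s
        = ∫⁻ ω, G (emb u ω (r+1)) ∂ M.μ s := by
      apply lintegral_congr
      intro ω
      have : shiftP (T ω) ω (u (shiftP (T ω) ω 0)) = emb u ω (r+1) := by
        show ω (sigmaT u ω r + u (ω (sigmaT u ω r + 0))) = ω (sigmaT u ω (r+1))
        rw [Nat.add_zero, sigmaT_succ]
      rw [this]
    have hid0 : ∫⁻ ω, G (shiftP (T ω) ω 0) ∂ M.μ s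
        = ∫⁻ ω, G (emb u ω r) ∂ M.μ s := by
      apply lintegral_congr
      intro ω
      have : shiftP (T ω) ω 0 = emb u ω r := by
        show ω (sigmaT u ω r + 0) = ω (sigmaT u ω r)
        rw [Nat.add_zero]
      rw [this]
    rw [hid1] at hMD1
    rw [hid0] at hMD0
    have hinner : ∀ t : S, (∫⁻ ω', G (ω' (u (ω' 0))) ∂ M.μ t) ≤ G t + C0 := by
      intro t
      rw [lint_emb_u M u G t]
      by_cases ht : t ∈ S0
      · exact le_trans (HC0 t ht) le_add_self
      · exact le_trans (HK1w t ht) le_self_add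
    calc ∫⁻ ω, G (emb u ω (r+1)) ∂ M.μ s
        = ∑' q : ℕ × S, M.μ s (Set.univ ∩ {ω | T ω = q.1 ∧ ω q.1 = q.2})
            * ∫⁻ ω', G (ω' (u (ω' 0))) ∂ M.μ q.2 := hMD1
      _ ≤ ∑' q : ℕ × S, (M.μ s (Set.univ ∩ {ω | T ω = q.1 ∧ ω q.1 = q.2}) * G q.2
            + M.μ s (Set.univ ∩ {ω | T ω = q.1 ∧ ω q.1 = q.2}) * C0) := by
          refine ENNReal.tsum_le_tsum fun q => ?_
          rw [← mul_add]
          exact mul_le_mul_right (hinner q.2) _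
      _ = (∑' q : ℕ × S, M.μ s (Set.univ ∩ {ω | T ω = q.1 ∧ ω q.1 = q.2}) * G q.2)
            + (∑' q : ℕ × S, M.μ s (Set.univ ∩ {ω | T ω = q.1 ∧ ω q.1 = q.2})) * C0 := by
          rw [ENNReal.tsum_add, ENNReal.tsum_mul_right]
      _ = (∫⁻ ω, G (emb u ω r) ∂ M.μ s) + C0 := by
          rw [← hMDm, prob_univ, one_mul]
          congr 1
          rw [hMD0]
          congr 1
          funext q
          rw [lint_coord0 M G q.2]
      _ ≤ (G s + r * C0) + C0 := add_le_add_left ih C0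
      _ = G s + (r + 1 : ℕ) * C0 := by
          push_cast
          ring

end FosterProof
namespace FosterProof
set_option linter.unusedSectionVars false
open MeasureTheory ENNReal
variable {S : Type} [MeasurableSpace S] [MeasurableSingletonClass S] [Countable S]

section Trials
variable (u : S → ℕ) (S0 : Set S) (m : ℕ) (y : S)

/-- `TrialAt j k ω` : the `j`-th trial happens at embedded index `k`. -/
def TrialAt : ℕ → ℕ → (ℕ → S) → Prop
  | 0, k, ω => emb u ω k ∈ S0 ∧ ∀ r < k, emb u ω r ∉ S0
  | (j+1), k, ω => ∃ k', TrialAt j k' ω ∧ k' + m ≤ k ∧ emb u ω k ∈ S0 ∧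
      ∀ r, k' + m ≤ r → r < k → emb u ω r ∉ S0

lemma trialAt_mem {j k : ℕ} {ω : ℕ → S} (h : TrialAt u S0 m j k ω) : emb u ω k ∈ S0 := by
  cases j with
  | zero => exact h.1
  | succ j => obtain ⟨k', _, _, h3, _⟩ := h; exact h3

lemma trial_unique {j k k' : ℕ} {ω : ℕ → S} (h : TrialAt u S0 m j k ω)
    (h' : TrialAt u S0 m j k' ω) : k = k' := by
  induction j generalizing k k' with
  | zero =>
    by_contra hne
    rcases Nat.lt_or_ge k k' with hlt | hge
    · exact h'.2 k hlt h.1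
    · exact h.2 k' (by omega) h'.1
  | succ j ih =>
    obtain ⟨a, ha, ham, hak, hamin⟩ := h
    obtain ⟨b, hb, hbm, hbk, hbmin⟩ := h'
    have hab : a = b := ih ha hb
    subst hab
    by_contra hne
    rcases Nat.lt_or_ge k k' with hlt | hge
    · exact hbmin k ham hlt hak
    · exact hamin k' hbm (by omega) hbk

lemma trial_chain {j k : ℕ} {ω : ℕ → S} (h : TrialAt u S0 m j k ω) :
    ∀ i < j, ∃ ki, TrialAt u S0 m i ki ω ∧ ki + m ≤ k := by
  induction j generalizing k with
  | zero => intro i hi; omega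
  | succ j ih =>
    intro i hi
    obtain ⟨k', hk', hk'm, _, _⟩ := h
    rcases Nat.lt_or_ge i j with hij | hij
    · obtain ⟨ki, hki, hkim⟩ := ih hk' i hij
      exact ⟨ki, hki, by omega⟩
    · have : i = j := by omega
      subst this
      exact ⟨k', hk', hk'm⟩

lemma trial_det {n : ℕ} {ω ω' : ℕ → S} (hag : ∀ i ≤ n, ω i = ω' i) :
    ∀ {j k : ℕ}, sigmaT u ω k ≤ n → TrialAt u S0 m j k ω → TrialAt u S0 m j k ω' := by
  intro j
  induction j with
  | zero =>
    intro k hk h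
    refine ⟨?_, fun r hr hmem => h.2 r hr ?_⟩
    · rw [emb_det hag hk]; exact h.1
    · rwa [← emb_det hag (le_trans (sigmaT_mono ω (le_of_lt hr)) hk)]
  | succ j ih =>
    intro k hk h
    obtain ⟨k', h1, h2, h3, h4⟩ := h
    refine ⟨k', ih (le_trans (sigmaT_mono ω (by omega)) hk) h1, h2, ?_, ?_⟩
    · rw [emb_det hag hk]; exact h3
    · intro r hr1 hr2
      rw [emb_det hag (le_trans (sigmaT_mono ω (le_of_lt hr2)) hk)]
      exact h4 r hr1 hr2

/-- `FailT j k ω`: trial `j` happens at `k` and fails. -/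
def FailT (j k : ℕ) (ω : ℕ → S) : Prop :=
  TrialAt u S0 m j k ω ∧ ∀ i, 1 ≤ i → i ≤ m → ω (sigmaT u ω k + i) ≠ y

def SuccT (j k : ℕ) (ω : ℕ → S) : Prop :=
  TrialAt u S0 m j k ω ∧ ∃ i, 1 ≤ i ∧ i ≤ m ∧ ω (sigmaT u ω k + i) = y

/-- `Bset j`: all trials `0, …, j-1` happen and fail. -/
def Bset (j : ℕ) : Set (ℕ → S) := {ω | ∀ i < j, ∃ k, FailT u S0 m y i k ω}

lemma Bset_zero : Bset u S0 m y 0 = Set.univ := by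
  ext ω; simp [Bset]

lemma Bset_mono {j j' : ℕ} (h : j ≤ j') : Bset u S0 m y j' ⊆ Bset u S0 m y j :=
  fun ω hω i hi => hω i (by omega)

lemma fail_det {n : ℕ} {ω ω' : ℕ → S} (hag : ∀ i ≤ n, ω i = ω' i)
    {j k : ℕ} (hk : sigmaT u ω k + m ≤ n) (h : FailT u S0 m y j k ω) :
    FailT u S0 m y j k ω' := by
  have hσ : sigmaT u ω k ≤ n := by omega
  have hσeq : sigmaT u ω' k = sigmaT u ω k := sigmaT_det hag k hσ
  refine ⟨trial_det u S0 m hag hσ h.1, fun i hi1 him => ?_⟩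
  rw [hσeq, ← hag (sigmaT u ω k + i) (by omega)]
  exact h.2 i hi1 him

/-- Adaptedness of `Bset j ∩ {TrialAt j k}` with respect to `σ_k`. -/
lemma A_adapted (hu1 : ∀ s, 1 ≤ u s) (j k : ℕ) :
    ∀ ω ω', (∀ i ≤ sigmaT u ω k, ω i = ω' i) →
      ω ∈ Bset u S0 m y j ∩ {ω | TrialAt u S0 m j k ω} →
      ω' ∈ Bset u S0 m y j ∩ {ω | TrialAt u S0 m j k ω} ∧
        sigmaT u ω' k = sigmaT u ω k := by
  intro ω ω' hag ⟨hB, hT⟩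
  have hσeq : sigmaT u ω' k = sigmaT u ω k := sigmaT_det hag k le_rfl
  refine ⟨⟨?_, trial_det u S0 m hag le_rfl hT⟩, hσeq⟩
  intro i hi
  obtain ⟨ki, hki⟩ := hB i hi
  obtain ⟨ki', hki', hkim⟩ := trial_chain u S0 m hT i hi
  have : ki = ki' := trial_unique u S0 m hki.1 hki'
  subst this
  refine ⟨ki, fail_det u S0 m y hag ?_ hki⟩
  calc sigmaT u ω ki + m ≤ sigmaT u ω (ki + m) := sigmaT_add_ge hu1 ω ki m
  _ ≤ sigmaT u ω k := sigmaT_mono ω hkim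

/-- Adaptedness of `Bset (j+1) ∩ {TrialAt j k}` with respect to `σ_{k+m}`. -/
lemma A'_adapted (hu1 : ∀ s, 1 ≤ u s) (j k : ℕ) :
    ∀ ω ω', (∀ i ≤ sigmaT u ω (k + m), ω i = ω' i) →
      ω ∈ Bset u S0 m y (j+1) ∩ {ω | TrialAt u S0 m j k ω} →
      ω' ∈ Bset u S0 m y (j+1) ∩ {ω | TrialAt u S0 m j k ω} ∧
        sigmaT u ω' (k + m) = sigmaT u ω (k + m) := by
  intro ω ω' hag ⟨hB, hT⟩
  have hσk : sigmaT u ω k ≤ sigmaT u ω (k + m) := sigmaT_mono ω (by omega)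
  have hσeq : sigmaT u ω' (k+m) = sigmaT u ω (k+m) := sigmaT_det hag (k+m) le_rfl
  refine ⟨⟨?_, trial_det u S0 m hag hσk hT⟩, hσeq⟩
  intro i hi
  obtain ⟨ki, hki⟩ := hB i hi
  rcases Nat.lt_or_ge i j with hij | hij
  · obtain ⟨ki', hki', hkim⟩ := trial_chain u S0 m hT i hij
    have : ki = ki' := trial_unique u S0 m hki.1 hki'
    subst this
    refine ⟨ki, fail_det u S0 m y hag ?_ hki⟩
    calc sigmaT u ω ki + m ≤ sigmaT u ω (ki + m) := sigmaT_add_ge hu1 ω ki m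
    _ ≤ sigmaT u ω (k + m) := sigmaT_mono ω (by omega)
  · have hij' : i = j := by omega
    subst hij'
    have hkk : ki = k := trial_unique u S0 m hki.1 hT
    refine ⟨ki, fail_det u S0 m y hag ?_ hki⟩
    calc sigmaT u ω ki + m ≤ sigmaT u ω (ki + m) := sigmaT_add_ge hu1 ω ki m
    _ ≤ sigmaT u ω (k + m) := le_of_eq (by rw [hkk])

end Trials
end FosterProof
namespace FosterProof
set_option linter.unusedSectionVars false
open MeasureTheory ENNReal
variable {S : Type} [MeasurableSpace S] [MeasurableSingletonClass S] [Countable S]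

lemma adapted_measurableSet (A : Set (ℕ → S)) (T : (ℕ → S) → ℕ)
    (hadapt : ∀ ω ω', (∀ i ≤ T ω, ω i = ω' i) → ω ∈ A → ω' ∈ A ∧ T ω' = T ω) :
    MeasurableSet A := by
  have hA : A = ⋃ τ : ℕ, A ∩ {ω | T ω = τ} := by
    ext ω
    simp only [Set.mem_iUnion, Set.mem_inter_iff, Set.mem_setOf_eq]
    exact ⟨fun h => ⟨T ω, h, rfl⟩, fun ⟨τ, h, _⟩ => h⟩
  rw [hA]
  refine MeasurableSet.iUnion fun τ => DepOn.measurableSet (n := τ) ?_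
  rintro ω ω' h ⟨hωA, hT⟩
  have h' : ∀ i ≤ T ω, ω i = ω' i := by rw [hT]; exact h
  obtain ⟨hA', hT'⟩ := hadapt ω ω' h' hωA
  exact ⟨hA', hT'.trans hT⟩

section TrialMeas
variable (u : S → ℕ) (S0 : Set S) (m : ℕ) (y : S)

lemma measurable_trialAt (j k : ℕ) : MeasurableSet {ω : ℕ → S | TrialAt u S0 m j k ω} :=
  adapted_measurableSet _ (fun ω => sigmaT u ω k)
    (fun ω ω' h hω => ⟨trial_det u S0 m h le_rfl hω, sigmaT_det h k le_rfl⟩)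

lemma measurable_failT (j k : ℕ) : MeasurableSet {ω : ℕ → S | FailT u S0 m y j k ω} :=
  adapted_measurableSet _ (fun ω => sigmaT u ω k + m)
    (fun ω ω' h hω =>
      ⟨fail_det u S0 m y h le_rfl hω, by
        show sigmaT u ω' k + m = sigmaT u ω k + m
        rw [sigmaT_det h k (Nat.le_add_right _ _)]⟩)

lemma measurable_Bset (j : ℕ) : MeasurableSet (Bset u S0 m y j) := by
  have : Bset u S0 m y j = ⋂ (i : ℕ) (_ : i < j), ⋃ k : ℕ, {ω | FailT u S0 m y i k ω} := by
    ext ω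
    simp [Bset]
  rw [this]
  exact MeasurableSet.iInter fun i => MeasurableSet.iInter fun _ =>
    MeasurableSet.iUnion fun k => measurable_failT u S0 m y i k

lemma measurable_noHit (k r : ℕ) :
    MeasurableSet {ω : ℕ → S | ∀ ρ ≤ r, emb u ω (k + m + ρ) ∉ S0} :=
  adapted_measurableSet _ (fun ω => sigmaT u ω (k + m + r))
    (fun ω ω' h hω => by
      refine ⟨fun ρ hρ => ?_, sigmaT_det h _ le_rfl⟩
      rw [emb_det h (sigmaT_mono ω (by omega))]
      exact hω ρ hρ)

/-- The failure window event for the shifted path. -/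
def FailW (m : ℕ) (y : S) : Set (ℕ → S) := {ω' | ∀ i, 1 ≤ i → i ≤ m → ω' i ≠ y}

lemma measurable_FailW : MeasurableSet (FailW m y : Set (ℕ → S)) :=
  DepOn.measurableSet (n := m) fun ω ω' h hω i hi1 him => by
    rw [← h i (by omega)]
    exact hω i hi1 him

end TrialMeas

/-- Indicator-shift integral lemma. -/
lemma lint_indicator_shift (μ : Measure (ℕ → S)) (A : Set (ℕ → S)) (hA : MeasurableSet A)
    (B : Set (ℕ → S)) (g : (ℕ → S) → (ℕ → S))
    (hDA : MeasurableSet ({ω | g ω ∈ B} ∩ A)) :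
    ∫⁻ ω in A, B.indicator (fun _ => (1:ℝ≥0∞)) (g ω) ∂μ = μ ({ω | g ω ∈ B} ∩ A) := by
  set D := {ω | g ω ∈ B} with hD
  have hpt : ∀ ω ∈ A, B.indicator (fun _ => (1:ℝ≥0∞)) (g ω)
      = (D ∩ A).indicator (fun _ => (1:ℝ≥0∞)) ω := by
    intro ω hω
    by_cases hgb : g ω ∈ B
    · have hmem : ω ∈ D ∩ A := ⟨hgb, hω⟩
      rw [Set.indicator_of_mem hgb, Set.indicator_of_mem hmem]
    · have hmem : ω ∉ D ∩ A := fun hc => hgb hc.1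
      rw [Set.indicator_of_notMem hgb, Set.indicator_of_notMem hmem]
  rw [setLIntegral_congr_fun hA hpt]
  rw [lintegral_indicator hDA, setLIntegral_one, Measure.restrict_apply hDA]
  rw [Set.inter_assoc, Set.inter_self]

section Geom
variable (M : MarkovChain S) (u : S → ℕ) (S0 : Set S) (m : ℕ) (y : S)
variable (β : ℝ≥0∞)

lemma Bset_succ_eq (j k : ℕ) :
    Bset u S0 m y (j+1) ∩ {ω | TrialAt u S0 m j k ω}
      = {ω | shiftP (sigmaT u ω k) ω ∈ FailW m y}
          ∩ (Bset u S0 m y j ∩ {ω | TrialAt u S0 m j k ω}) := by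
  ext ω
  simp only [Set.mem_inter_iff, Set.mem_setOf_eq]
  constructor
  · rintro ⟨hB, hT⟩
    refine ⟨?_, Bset_mono u S0 m y (Nat.le_succ j) hB, hT⟩
    obtain ⟨k', hk'⟩ := hB j (Nat.lt_succ_self j)
    have : k' = k := trial_unique u S0 m hk'.1 hT
    subst this
    intro i hi1 him
    exact hk'.2 i hi1 him
  · rintro ⟨hW, hB, hT⟩
    refine ⟨?_, hT⟩
    intro i hi
    rcases Nat.lt_or_ge i j with hij | hij
    · exact hB i hij
    · have : i = j := by omega
      subst this
      exact ⟨k, hT, fun i' hi1 him => hW i' hi1 him⟩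
  
lemma Bset_partition (z : S) (j : ℕ) (hsub : Bset u S0 m y (j+1) ⊆
    ⋃ k : ℕ, Bset u S0 m y (j+1) ∩ {ω | TrialAt u S0 m j k ω}) :
    M.μ z (Bset u S0 m y (j+1))
      = ∑' k : ℕ, M.μ z (Bset u S0 m y (j+1) ∩ {ω | TrialAt u S0 m j k ω}) := by
  have huniv : Bset u S0 m y (j+1) = ⋃ k : ℕ,
      Bset u S0 m y (j+1) ∩ {ω | TrialAt u S0 m j k ω} := by
    refine Set.eq_of_subset_of_subset hsub (Set.iUnion_subset fun k => Set.inter_subset_left)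
  conv_lhs => rw [huniv]
  refine measure_iUnion ?_ (fun k => (measurable_Bset u S0 m y (j+1)).inter
    (measurable_trialAt u S0 m j k))
  intro k k' hkk'
  refine Set.disjoint_left.2 fun ω hω hω' => hkk' ?_
  exact trial_unique u S0 m hω.2 hω'.2

lemma Bset_sub_union (j : ℕ) : Bset u S0 m y (j+1) ⊆
    ⋃ k : ℕ, Bset u S0 m y (j+1) ∩ {ω | TrialAt u S0 m j k ω} := by
  intro ω hω
  obtain ⟨k, hk⟩ := hω j (Nat.lt_succ_self j)
  exact Set.mem_iUnion.2 ⟨k, hω, hk.1⟩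

lemma Bset_step (hu1 : ∀ s, 1 ≤ u s) (hβ : ∀ s ∈ S0, M.μ s (FailW m y) ≤ β)
    (z : S) (j : ℕ) :
    M.μ z (Bset u S0 m y (j+1)) ≤ β * M.μ z (Bset u S0 m y j) := by
  rw [Bset_partition M u S0 m y z j (Bset_sub_union u S0 m y j)]
  set A : ℕ → Set (ℕ → S) := fun k => Bset u S0 m y j ∩ {ω | TrialAt u S0 m j k ω}
    with hAdef
  have hAmeas : ∀ k, MeasurableSet (A k) := fun k =>
    (measurable_Bset u S0 m y j).inter (measurable_trialAt u S0 m j k)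
  have hstep : ∀ k : ℕ, M.μ z (Bset u S0 m y (j+1) ∩ {ω | TrialAt u S0 m j k ω})
      ≤ β * M.μ z (A k) := by
    intro k
    have heq := Bset_succ_eq u S0 m y j k
    rw [heq]
    have hIL := lint_indicator_shift (M.μ z) (A k) (hAmeas k) (FailW m y)
      (fun ω => shiftP (sigmaT u ω k) ω)
      (by rw [← heq]
          exact (measurable_Bset u S0 m y (j+1)).inter (measurable_trialAt u S0 m j k))
    rw [← hIL]
    have hMD := MD M z (A k) (fun ω => sigmaT u ω k) (A_adapted u S0 m y hu1 j k)
      ((FailW m y).indicator (fun _ => (1:ℝ≥0∞)))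
      (measurable_const.indicator (measurable_FailW m y))
    rw [hMD]
    have hMDm := MD_meas M z (A k) (fun ω => sigmaT u ω k) (A_adapted u S0 m y hu1 j k)
    calc ∑' q : ℕ × S, M.μ z (A k ∩ {ω | sigmaT u ω k = q.1 ∧ ω q.1 = q.2})
          * ∫⁻ ω', (FailW m y).indicator (fun _ => (1:ℝ≥0∞)) ω' ∂ M.μ q.2
        ≤ ∑' q : ℕ × S, M.μ z (A k ∩ {ω | sigmaT u ω k = q.1 ∧ ω q.1 = q.2}) * β := by
          refine ENNReal.tsum_le_tsum fun q => ?_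
          rcases Set.eq_empty_or_nonempty
            (A k ∩ {ω | sigmaT u ω k = q.1 ∧ ω q.1 = q.2}) with hemp | hne
          · rw [hemp]
            simp
          · obtain ⟨ω, hω⟩ := hne
            have hq2 : q.2 ∈ S0 := by
              have h1 : emb u ω k ∈ S0 := trialAt_mem u S0 m hω.1.2
              have : emb u ω k = q.2 := by
                show ω (sigmaT u ω k) = q.2
                rw [hω.2.1, hω.2.2]
              rwa [this] at h1
            refine mul_le_mul_right ?_ _
            rw [lintegral_indicator (measurable_FailW m y), setLIntegral_one]
            exact hβ q.2 hq2
      _ = M.μ z (A k) * β := by rw [ENNReal.tsum_mul_right, ← hMDm]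
      _ = β * M.μ z (A k) := mul_comm _ _
  calc ∑' k : ℕ, M.μ z (Bset u S0 m y (j+1) ∩ {ω | TrialAt u S0 m j k ω})
      ≤ ∑' k : ℕ, β * M.μ z (A k) := ENNReal.tsum_le_tsum hstep
    _ = β * ∑' k : ℕ, M.μ z (A k) := ENNReal.tsum_mul_left
    _ ≤ β * M.μ z (Bset u S0 m y j) := by
        refine mul_le_mul_right ?_ β
        rw [← measure_iUnion ?_ hAmeas]
        · exact measure_mono (Set.iUnion_subset fun k => Set.inter_subset_left)
        · intro k k' hkk'
          refine Set.disjoint_left.2 fun ω hω hω' => hkk' ?_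
          exact trial_unique u S0 m hω.2 hω'.2

lemma Bset_geom (hu1 : ∀ s, 1 ≤ u s) (hβ : ∀ s ∈ S0, M.μ s (FailW m y) ≤ β)
    (z : S) (j : ℕ) : M.μ z (Bset u S0 m y j) ≤ β ^ j := by
  induction j with
  | zero =>
    rw [Bset_zero, pow_zero, prob_univ]
  | succ j ih =>
    calc M.μ z (Bset u S0 m y (j+1)) ≤ β * M.μ z (Bset u S0 m y j) :=
        Bset_step M u S0 m y β hu1 hβ z j
      _ ≤ β * β ^ j := mul_le_mul_right ih β
      _ = β ^ (j+1) := (pow_succ' β j).symm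

end Geom
end FosterProof
namespace FosterProof
set_option linter.unusedSectionVars false
open MeasureTheory ENNReal
variable {S : Type} [MeasurableSpace S] [MeasurableSingletonClass S] [Countable S]
variable (M : MarkovChain S) (u : S → ℕ) (S0 : Set S) (m : ℕ) (y : S)

/-- After trial `j` (failed), the embedded chain stays out of `S0` for `r+1` further
steps beyond the `m`-step spacer. -/
def Dset (j r : ℕ) : Set (ℕ → S) :=
  Bset u S0 m y (j+1) ∩
    {ω | ∃ k, TrialAt u S0 m j k ω ∧ ∀ ρ ≤ r, emb u ω (k + m + ρ) ∉ S0}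

lemma measurable_Dset (j r : ℕ) : MeasurableSet (Dset u S0 m y j r) := by
  refine (measurable_Bset u S0 m y (j+1)).inter ?_
  have : {ω : ℕ → S | ∃ k, TrialAt u S0 m j k ω ∧ ∀ ρ ≤ r, emb u ω (k + m + ρ) ∉ S0}
      = ⋃ k : ℕ, ({ω | TrialAt u S0 m j k ω} ∩ {ω | ∀ ρ ≤ r, emb u ω (k + m + ρ) ∉ S0}) := by
    ext ω
    simp only [Set.mem_setOf_eq, Set.mem_iUnion, Set.mem_inter_iff]
  rw [this]
  exact MeasurableSet.iUnion fun k =>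
    (measurable_trialAt u S0 m j k).inter (measurable_noHit u S0 m k r)

lemma Dset_piece_eq (j r k : ℕ) :
    Dset u S0 m y j r ∩ {ω | TrialAt u S0 m j k ω}
      = {ω | shiftP (sigmaT u ω (k+m)) ω ∈ RR u S0 (r+1)}
          ∩ (Bset u S0 m y (j+1) ∩ {ω | TrialAt u S0 m j k ω}) := by
  ext ω
  simp only [Dset, Set.mem_inter_iff, Set.mem_setOf_eq, RR]
  constructor
  · rintro ⟨⟨hB, k', hk', hnh⟩, hT⟩
    have hkk : k' = k := trial_unique u S0 m hk' hT
    rw [hkk] at hnh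
    refine ⟨?_, hB, hT⟩
    intro ρ hρ
    rw [← emb_shift ω (k+m) ρ]
    exact hnh ρ (by omega)
  · rintro ⟨hW, hB, hT⟩
    refine ⟨⟨hB, k, hT, ?_⟩, hT⟩
    intro ρ hρ
    rw [emb_shift ω (k+m) ρ]
    exact hW ρ (by omega)

lemma Dset_partition (z : S) (j r : ℕ) :
    M.μ z (Dset u S0 m y j r)
      = ∑' k : ℕ, M.μ z (Dset u S0 m y j r ∩ {ω | TrialAt u S0 m j k ω}) := by
  have huniv : Dset u S0 m y j r = ⋃ k : ℕ,
      Dset u S0 m y j r ∩ {ω | TrialAt u S0 m j k ω} := by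
    refine Set.eq_of_subset_of_subset ?_ (Set.iUnion_subset fun k => Set.inter_subset_left)
    rintro ω ⟨hB, k, hk, hnh⟩
    exact Set.mem_iUnion.2 ⟨k, ⟨hB, k, hk, hnh⟩, hk⟩
  conv_lhs => rw [huniv]
  refine measure_iUnion ?_ (fun k => (measurable_Dset u S0 m y j r).inter
    (measurable_trialAt u S0 m j k))
  intro k k' hkk'
  refine Set.disjoint_left.2 fun ω hω hω' => hkk' ?_
  exact trial_unique u S0 m hω.2 hω'.2

lemma Dsum_bound (G : S → ℝ≥0∞) (δ' β C0 Gb : ℝ≥0∞)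
    (hu1 : ∀ s, 1 ≤ u s)
    (HTL : ∀ t : S, ∑' r : ℕ, M.μ t (RR u S0 (r+1)) ≤ G t * δ'⁻¹)
    (hGit : ∀ (t : S) (r : ℕ), (∫⁻ ω, G (emb u ω r) ∂ M.μ t) ≤ G t + r * C0)
    (hGb : ∀ t ∈ S0, G t ≤ Gb)
    (z : S) (j : ℕ) (hBj : M.μ z (Bset u S0 m y j) ≤ β ^ j) :
    ∑' r : ℕ, M.μ z (Dset u S0 m y j r) ≤ β ^ j * ((Gb + m * C0) * δ'⁻¹) := by
  set A : ℕ → Set (ℕ → S) := fun k => Bset u S0 m y j ∩ {ω | TrialAt u S0 m j k ω}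
    with hAdef
  set A' : ℕ → Set (ℕ → S) := fun k => Bset u S0 m y (j+1) ∩ {ω | TrialAt u S0 m j k ω}
    with hA'def
  have hAmeas : ∀ k, MeasurableSet (A k) := fun k =>
    (measurable_Bset u S0 m y j).inter (measurable_trialAt u S0 m j k)
  have hA'meas : ∀ k, MeasurableSet (A' k) := fun k =>
    (measurable_Bset u S0 m y (j+1)).inter (measurable_trialAt u S0 m j k)
  have hA'A : ∀ k, A' k ⊆ A k := fun k =>
    Set.inter_subset_inter_left _ (Bset_mono u S0 m y (Nat.le_succ j))
  -- per (k, r) : measure of piece via MD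
  have hpiece : ∀ k r : ℕ, M.μ z (Dset u S0 m y j r ∩ {ω | TrialAt u S0 m j k ω})
      = ∑' q : ℕ × S, M.μ z (A' k ∩ {ω | sigmaT u ω (k+m) = q.1 ∧ ω q.1 = q.2})
          * M.μ q.2 (RR u S0 (r+1)) := by
    intro k r
    rw [Dset_piece_eq u S0 m y j r k]
    have hIL := lint_indicator_shift (M.μ z) (A' k) (hA'meas k) (RR u S0 (r+1))
      (fun ω => shiftP (sigmaT u ω (k+m)) ω)
      (by rw [show {ω | (fun ω => shiftP (sigmaT u ω (k+m)) ω) ω ∈ RR u S0 (r+1)} ∩ A' k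
            = Dset u S0 m y j r ∩ {ω | TrialAt u S0 m j k ω} from by
              rw [Dset_piece_eq u S0 m y j r k, Set.inter_comm]]
          exact (measurable_Dset u S0 m y j r).inter (measurable_trialAt u S0 m j k))
    rw [show {ω | shiftP (sigmaT u ω (k+m)) ω ∈ RR u S0 (r+1)}
          ∩ (Bset u S0 m y (j+1) ∩ {ω | TrialAt u S0 m j k ω})
        = {ω | (fun ω => shiftP (sigmaT u ω (k+m)) ω) ω ∈ RR u S0 (r+1)} ∩ A' k from rfl]
    rw [← hIL]
    have hMD := MD M z (A' k) (fun ω => sigmaT u ω (k+m)) (A'_adapted u S0 m y hu1 j k)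
      ((RR u S0 (r+1)).indicator (fun _ => (1:ℝ≥0∞)))
      (measurable_const.indicator (measurable_RR u S0 (r+1)))
    rw [hMD]
    congr 1
    funext q
    rw [lintegral_indicator (measurable_RR u S0 (r+1)), setLIntegral_one]
  -- the k-th inner sum over r
  have hinner : ∀ k : ℕ,
      (∑' r : ℕ, M.μ z (Dset u S0 m y j r ∩ {ω | TrialAt u S0 m j k ω}))
        ≤ M.μ z (A k) * ((Gb + m * C0) * δ'⁻¹) := by
    intro k
    have h1 : (∑' r : ℕ, M.μ z (Dset u S0 m y j r ∩ {ω | TrialAt u S0 m j k ω}))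
        = ∑' q : ℕ × S, M.μ z (A' k ∩ {ω | sigmaT u ω (k+m) = q.1 ∧ ω q.1 = q.2})
            * ∑' r : ℕ, M.μ q.2 (RR u S0 (r+1)) := by
      rw [tsum_congr (hpiece k), ENNReal.tsum_comm]
      congr 1
      funext q
      rw [ENNReal.tsum_mul_left]
    rw [h1]
    have h2 : ∑' q : ℕ × S, M.μ z (A' k ∩ {ω | sigmaT u ω (k+m) = q.1 ∧ ω q.1 = q.2})
        * ∑' r : ℕ, M.μ q.2 (RR u S0 (r+1))
        ≤ (∑' q : ℕ × S, M.μ z (A' k ∩ {ω | sigmaT u ω (k+m) = q.1 ∧ ω q.1 = q.2})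
            * G q.2) * δ'⁻¹ := by
      rw [← ENNReal.tsum_mul_right]
      refine ENNReal.tsum_le_tsum fun q => ?_
      rw [mul_assoc]
      exact mul_le_mul_right (HTL q.2) _
    refine le_trans h2 ?_
    have h3 : ∑' q : ℕ × S, M.μ z (A' k ∩ {ω | sigmaT u ω (k+m) = q.1 ∧ ω q.1 = q.2})
        * G q.2 = ∫⁻ ω in A' k, G (emb u ω (k+m)) ∂ M.μ z := by
      have hMD0 := MD M z (A' k) (fun ω => sigmaT u ω (k+m))
        (A'_adapted u S0 m y hu1 j k) (fun ω' => G (ω' 0)) (measurable_H0 G)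
      rw [show ∫⁻ ω in A' k, (fun ω' => G (ω' 0)) (shiftP ((fun ω => sigmaT u ω (k+m)) ω) ω)
            ∂ M.μ z = ∫⁻ ω in A' k, G (emb u ω (k+m)) ∂ M.μ z from
          lintegral_congr fun ω => by
            show G (ω (sigmaT u ω (k+m) + 0)) = G (emb u ω (k+m))
            rw [Nat.add_zero]
            rfl] at hMD0
      rw [hMD0]
      congr 1
      funext q
      rw [lint_coord0 M G q.2]
    rw [h3]
    have h4 : ∫⁻ ω in A' k, G (emb u ω (k+m)) ∂ M.μ z
        ≤ ∫⁻ ω in A k, G (emb u ω (k+m)) ∂ M.μ z := lintegral_mono_set (hA'A k)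
    have h5 : ∫⁻ ω in A k, G (emb u ω (k+m)) ∂ M.μ z
        ≤ M.μ z (A k) * (Gb + m * C0) := by
      have hMDm := MD M z (A k) (fun ω => sigmaT u ω k) (A_adapted u S0 m y hu1 j k)
        (fun ω' => G (emb u ω' m))
        (measurable_G_comp G (fun ω' => sigmaT u ω' m) (measurable_sigmaT u m))
      rw [show ∫⁻ ω in A k, (fun ω' => G (emb u ω' m)) (shiftP ((fun ω => sigmaT u ω k) ω) ω)
            ∂ M.μ z = ∫⁻ ω in A k, G (emb u ω (k+m)) ∂ M.μ z from
          lintegral_congr fun ω => by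
            show G (emb u (shiftP (sigmaT u ω k) ω) m) = G (emb u ω (k+m))
            rw [← emb_shift ω k m]] at hMDm
      rw [hMDm]
      have hbound : ∀ q : ℕ × S,
          M.μ z (A k ∩ {ω | sigmaT u ω k = q.1 ∧ ω q.1 = q.2})
            * ∫⁻ ω', G (emb u ω' m) ∂ M.μ q.2
          ≤ M.μ z (A k ∩ {ω | sigmaT u ω k = q.1 ∧ ω q.1 = q.2}) * (Gb + m * C0) := by
        intro q
        rcases Set.eq_empty_or_nonempty
          (A k ∩ {ω | sigmaT u ω k = q.1 ∧ ω q.1 = q.2}) with hemp | hne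
        · rw [hemp]; simp
        · obtain ⟨ω, hω⟩ := hne
          have hq2 : q.2 ∈ S0 := by
            have h1 : emb u ω k ∈ S0 := trialAt_mem u S0 m hω.1.2
            have h2 : emb u ω k = q.2 := by
              show ω (sigmaT u ω k) = q.2
              rw [hω.2.1, hω.2.2]
            rwa [h2] at h1
          refine mul_le_mul_right ?_ _
          exact le_trans (hGit q.2 m) (add_le_add_left (hGb q.2 hq2) _)
      calc ∑' q : ℕ × S, M.μ z (A k ∩ {ω | sigmaT u ω k = q.1 ∧ ω q.1 = q.2})
            * ∫⁻ ω', G (emb u ω' m) ∂ M.μ q.2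
          ≤ ∑' q : ℕ × S, M.μ z (A k ∩ {ω | sigmaT u ω k = q.1 ∧ ω q.1 = q.2})
            * (Gb + m * C0) := ENNReal.tsum_le_tsum hbound
        _ = M.μ z (A k) * (Gb + m * C0) := by
            rw [ENNReal.tsum_mul_right,
              ← MD_meas M z (A k) (fun ω => sigmaT u ω k) (A_adapted u S0 m y hu1 j k)]
    calc (∫⁻ ω in A' k, G (emb u ω (k+m)) ∂ M.μ z) * δ'⁻¹
        ≤ (M.μ z (A k) * (Gb + m * C0)) * δ'⁻¹ :=
          mul_le_mul_left (le_trans h4 h5) _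
      _ = M.μ z (A k) * ((Gb + m * C0) * δ'⁻¹) := by ring
  -- finish
  calc ∑' r : ℕ, M.μ z (Dset u S0 m y j r)
      = ∑' r : ℕ, ∑' k : ℕ, M.μ z (Dset u S0 m y j r ∩ {ω | TrialAt u S0 m j k ω}) := by
        exact tsum_congr (fun r => Dset_partition M u S0 m y z j r)
    _ = ∑' k : ℕ, ∑' r : ℕ, M.μ z (Dset u S0 m y j r ∩ {ω | TrialAt u S0 m j k ω}) :=
        ENNReal.tsum_comm
    _ ≤ ∑' k : ℕ, M.μ z (A k) * ((Gb + m * C0) * δ'⁻¹) := ENNReal.tsum_le_tsum hinner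
    _ = (∑' k : ℕ, M.μ z (A k)) * ((Gb + m * C0) * δ'⁻¹) := ENNReal.tsum_mul_right
    _ ≤ β ^ j * ((Gb + m * C0) * δ'⁻¹) := by
        refine mul_le_mul_left ?_ _
        refine le_trans (le_of_eq (measure_iUnion ?_ hAmeas).symm) ?_
        · intro k k' hkk'
          refine Set.disjoint_left.2 fun ω hω hω' => hkk' ?_
          exact trial_unique u S0 m hω.2 hω'.2
        · exact le_trans (measure_mono (Set.iUnion_subset fun k => Set.inter_subset_left)) hBj

end FosterProof
namespace FosterProof
set_option linter.unusedSectionVars false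
open MeasureTheory ENNReal
variable {S : Type} [MeasurableSpace S] [MeasurableSingletonClass S] [Countable S]
variable (u : S → ℕ) (S0 : Set S) (m : ℕ) (y : S)

lemma countN (c : ℕ) : (∑' n : ℕ, if n < c then (1:ℝ≥0∞) else 0) = c := by
  rw [tsum_eq_sum (s := Finset.range c) (fun b hb => by
    rw [if_neg]
    simpa using hb)]
  rw [Finset.sum_congr rfl (fun n hn => by
    rw [if_pos (Finset.mem_range.1 hn)])]
  simp

noncomputable def K0fun : (ℕ → S) → ℝ≥0∞ :=
  fun ω => ∑' k : ℕ, (RR u S0 (k+1)).indicator (fun _ => (1:ℝ≥0∞)) ω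

noncomputable def incB (j : ℕ) : (ℕ → S) → ℝ≥0∞ :=
  fun ω => (m : ℝ≥0∞) * (Bset u S0 m y (j+1)).indicator (fun _ => (1:ℝ≥0∞)) ω
    + ∑' r : ℕ, (Dset u S0 m y j r).indicator (fun _ => (1:ℝ≥0∞)) ω

lemma measurable_K0fun : Measurable (K0fun u S0) :=
  Measurable.ennreal_tsum fun k => measurable_const.indicator (measurable_RR u S0 (k+1))

lemma measurable_incB (j : ℕ) : Measurable (incB u S0 m y j) := by
  refine Measurable.add ?_ ?_
  · exact (measurable_const.indicator (measurable_Bset u S0 m y (j+1))).const_mul _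
  · exact Measurable.ennreal_tsum fun r =>
      measurable_const.indicator (measurable_Dset u S0 m y j r)

/-- If trial `0` happens at `k`, then `K0fun = k`. -/
lemma K0fun_eq {ω : ℕ → S} {k : ℕ} (h : TrialAt u S0 m 0 k ω) : K0fun u S0 ω = k := by
  rw [K0fun, tsum_congr (fun k' => show (RR u S0 (k'+1)).indicator (fun _ => (1:ℝ≥0∞)) ω
      = if k' < k then 1 else 0 from by
    by_cases hk' : k' < k
    · rw [if_pos hk', Set.indicator_of_mem]
      intro j hj
      exact h.2 j (by omega)
    · rw [if_neg hk', Set.indicator_of_notMem]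
      intro hmem
      exact hmem k (by omega) h.1), countN]

/-- If trial `0` never happens, `K0fun = ⊤`. -/
lemma K0fun_top {ω : ℕ → S} (h : ¬ ∃ k, TrialAt u S0 m 0 k ω) : K0fun u S0 ω = ⊤ := by
  have hnever : ∀ k, emb u ω k ∉ S0 := by
    by_contra hc
    push_neg at hc
    obtain ⟨k, hk⟩ := hc
    have hex : ∃ k, emb u ω k ∈ S0 := ⟨k, hk⟩
    apply h
    exact ⟨Nat.find hex, Nat.find_spec hex, fun r hr => Nat.find_min hex hr⟩
  have : ∀ k' : ℕ, (RR u S0 (k'+1)).indicator (fun _ => (1:ℝ≥0∞)) ω = 1 := by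
    intro k'
    rw [Set.indicator_of_mem]
    intro j _
    exact hnever j
  rw [K0fun, tsum_congr this]
  exact ENNReal.tsum_const_eq_top_of_ne_zero one_ne_zero

/-- If trial `j` happens at `k'` but trial `j+1` never happens (and trials so far
failed), then `incB j = ⊤`. -/
lemma incB_top {ω : ℕ → S} {j k' : ℕ} (hB : ω ∈ Bset u S0 m y (j+1))
    (hT : TrialAt u S0 m j k' ω) (h : ¬ ∃ k, TrialAt u S0 m (j+1) k ω) :
    incB u S0 m y j ω = ⊤ := by
  have hnever : ∀ r, k' + m ≤ r → emb u ω r ∉ S0 := by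
    by_contra hc
    push_neg at hc
    have hex : ∃ r, k' + m ≤ r ∧ emb u ω r ∈ S0 := hc
    have hex' : ∃ r, emb u ω (k' + m + r) ∈ S0 := by
      obtain ⟨r, hr1, hr2⟩ := hex
      exact ⟨r - (k' + m), by rwa [show k' + m + (r - (k'+m)) = r by omega]⟩
    apply h
    refine ⟨k' + m + Nat.find hex', k', hT, by omega, Nat.find_spec hex', ?_⟩
    intro r hr1 hr2
    intro hmem
    have : r - (k' + m) < Nat.find hex' := by omega
    exact Nat.find_min hex' this (by rwa [show k' + m + (r - (k'+m)) = r by omega])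
  have hD : ∀ r : ℕ, (Dset u S0 m y j r).indicator (fun _ => (1:ℝ≥0∞)) ω = 1 := by
    intro r
    rw [Set.indicator_of_mem]
    exact ⟨hB, k', hT, fun ρ _ => hnever (k' + m + ρ) (by omega)⟩
  rw [incB, tsum_congr hD, ENNReal.tsum_const_eq_top_of_ne_zero one_ne_zero, add_top]

/-- Increment identity: if trials `j` and `j+1` happen at `k'` resp. `k`. -/
lemma incB_le {ω : ℕ → S} {j k' k : ℕ} (hB : ω ∈ Bset u S0 m y (j+1))
    (hT : TrialAt u S0 m j k' ω) (hT1 : TrialAt u S0 m (j+1) k ω) :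
    (k : ℝ≥0∞) ≤ (k' : ℝ≥0∞) + incB u S0 m y j ω := by
  obtain ⟨a, ha, ham, hak, hamin⟩ := hT1
  have haa : a = k' := trial_unique u S0 m ha hT
  have hD : ∀ r : ℕ, (Dset u S0 m y j r).indicator (fun _ => (1:ℝ≥0∞)) ω
      = if r < k - (a + m) then 1 else 0 := by
    intro r
    by_cases hr : a + m + r < k
    · rw [if_pos (by omega), Set.indicator_of_mem]
      exact ⟨hB, a, ha, fun ρ hρ => hamin (a + m + ρ) (by omega) (by omega)⟩
    · rw [if_neg (by omega), Set.indicator_of_notMem]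
      rintro ⟨_, k'', hk'', hnh⟩
      have hkk : k'' = a := trial_unique u S0 m hk'' ha
      rw [hkk] at hnh
      exact hnh (k - (a + m)) (by omega)
        (by rw [show a + m + (k - (a + m)) = k by omega]; exact hak)
  have hBi : (Bset u S0 m y (j+1)).indicator (fun _ => (1:ℝ≥0∞)) ω = 1 :=
    Set.indicator_of_mem hB _
  rw [incB, hBi, mul_one, tsum_congr hD, countN, ← haa]
  calc (k : ℝ≥0∞) = ((a + (m + (k - (a + m))) : ℕ) : ℝ≥0∞) := by
        congr 1
        omega
    _ = (a : ℝ≥0∞) + ((m : ℝ≥0∞) + ((k - (a+m) : ℕ) : ℝ≥0∞)) := by push_cast; ring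
    _ ≤ _ := le_rfl

/-- Telescoping: if trial `J` happens at `k` and all previous trials failed. -/
lemma telescope {ω : ℕ → S} : ∀ J k, TrialAt u S0 m J k ω → ω ∈ Bset u S0 m y J →
    (k : ℝ≥0∞) ≤ K0fun u S0 ω + ∑ j ∈ Finset.range J, incB u S0 m y j ω := by
  intro J
  induction J with
  | zero =>
    intro k hT _
    rw [K0fun_eq u S0 m hT]
    simp
  | succ J ih =>
    intro k hT hB
    have hTc := hT
    obtain ⟨k', hk', hk'm, -, -⟩ := hTc
    have hBJ : ω ∈ Bset u S0 m y J := Bset_mono u S0 m y (Nat.le_succ J) hB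
    calc (k : ℝ≥0∞) ≤ (k' : ℝ≥0∞) + incB u S0 m y J ω := incB_le u S0 m y hB hk' hT
      _ ≤ (K0fun u S0 ω + ∑ j ∈ Finset.range J, incB u S0 m y j ω)
          + incB u S0 m y J ω := add_le_add_left (ih k' hk' hBJ) _
      _ = K0fun u S0 ω + ∑ j ∈ Finset.range (J+1), incB u S0 m y j ω := by
          rw [Finset.sum_range_succ]
          ring

/-- In the no-success case the bound is infinite. -/
lemma nosucc_top (hm1 : 1 ≤ m) {ω : ℕ → S}
    (h : ¬ ∃ j k, SuccT u S0 m y j k ω) :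
    K0fun u S0 ω + ∑' j : ℕ, incB u S0 m y j ω = ⊤ := by
  push_neg at h
  -- every trial that happens, fails
  have hfail : ∀ j k, TrialAt u S0 m j k ω → FailT u S0 m y j k ω := by
    intro j k hT
    refine ⟨hT, fun i hi1 him hhit => h j k ⟨hT, i, hi1, him, hhit⟩⟩
  -- all trials that happen give Bset membership
  have hBall : ∀ j, (∀ i < j, ∃ ki, TrialAt u S0 m i ki ω) → ω ∈ Bset u S0 m y j := by
    intro j hj i hi
    obtain ⟨ki, hki⟩ := hj i hi
    exact ⟨ki, hfail i ki hki⟩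
  by_cases hall : ∀ j, ∃ k, TrialAt u S0 m j k ω
  · -- all trials happen: each incB ≥ m ≥ 1
    have hge : ∀ j, (1 : ℝ≥0∞) ≤ incB u S0 m y j ω := by
      intro j
      have hBj : ω ∈ Bset u S0 m y (j+1) := by
        apply hBall
        intro i _
        exact hall i
      have hBi : (Bset u S0 m y (j+1)).indicator (fun _ => (1:ℝ≥0∞)) ω = 1 :=
        Set.indicator_of_mem hBj _
      calc (1:ℝ≥0∞) ≤ (m : ℝ≥0∞) * 1 := by
            rw [mul_one]
            exact_mod_cast hm1
        _ = (m : ℝ≥0∞) * (Bset u S0 m y (j+1)).indicator (fun _ => (1:ℝ≥0∞)) ω := by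
            rw [hBi]
        _ ≤ incB u S0 m y j ω := le_self_add
    rw [eq_top_iff]
    calc (⊤:ℝ≥0∞) = ∑' _j : ℕ, (1:ℝ≥0∞) :=
          (ENNReal.tsum_const_eq_top_of_ne_zero one_ne_zero).symm
      _ ≤ ∑' j : ℕ, incB u S0 m y j ω := ENNReal.tsum_le_tsum hge
      _ ≤ _ := le_add_self
  · -- some trial fails to happen; take the minimal one
    push_neg at hall
    have hex : ∃ j, ¬ ∃ k, TrialAt u S0 m j k ω := by
      obtain ⟨j, hj⟩ := hall
      exact ⟨j, by push_neg; exact hj⟩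
    set j0 := Nat.find hex with hj0
    have hspec : ¬ ∃ k, TrialAt u S0 m j0 k ω := Nat.find_spec hex
    have hmin : ∀ i < j0, ∃ k, TrialAt u S0 m i k ω := by
      intro i hi
      by_contra hc
      exact Nat.find_min hex hi hc
    rcases Nat.eq_zero_or_pos j0 with hz | hpos
    · rw [K0fun_top u S0 m (hz ▸ hspec), top_add]
    · obtain ⟨k', hk'⟩ := hmin (j0 - 1) (by omega)
      have hB : ω ∈ Bset u S0 m y ((j0 - 1) + 1) := by
        apply hBall
        intro i hi
        exact hmin i (by omega)
      have htop : incB u S0 m y (j0 - 1) ω = ⊤ :=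
        incB_top u S0 m y hB hk'
          (by rwa [show j0 - 1 + 1 = j0 by omega])
      rw [eq_top_iff]
      calc (⊤:ℝ≥0∞) = incB u S0 m y (j0 - 1) ω := htop.symm
        _ ≤ ∑' j : ℕ, incB u S0 m y j ω :=
            le_trans (by exact le_rfl) (ENNReal.le_tsum (j0 - 1))
        _ ≤ _ := le_add_self

end FosterProof
namespace FosterProof
set_option linter.unusedSectionVars false
open MeasureTheory ENNReal
variable {S : Type} [MeasurableSpace S] [MeasurableSingletonClass S] [Countable S]

lemma tail_partial (x : ℝ≥0∞) (N : ℕ) :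
    (∑ n ∈ Finset.range N, if (n:ℝ≥0∞) < x then (1:ℝ≥0∞) else 0) ≤ x + 1 := by
  induction N with
  | zero => simp
  | succ N ih =>
    rw [Finset.sum_range_succ]
    by_cases hN : (N:ℝ≥0∞) < x
    · rw [if_pos hN]
      have hsum : (∑ n ∈ Finset.range N, if (n:ℝ≥0∞) < x then (1:ℝ≥0∞) else 0)
          ≤ (N : ℝ≥0∞) := by
        calc (∑ n ∈ Finset.range N, if (n:ℝ≥0∞) < x then (1:ℝ≥0∞) else 0)
            ≤ ∑ _n ∈ Finset.range N, (1:ℝ≥0∞) :=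
              Finset.sum_le_sum (fun i _ => by split <;> simp)
          _ = N := by simp
      calc (∑ n ∈ Finset.range N, if (n:ℝ≥0∞) < x then (1:ℝ≥0∞) else 0) + 1
          ≤ (N:ℝ≥0∞) + 1 := add_le_add_left hsum 1
        _ ≤ x + 1 := add_le_add_left hN.le 1
    · rw [if_neg hN, add_zero]
      exact ih

lemma tail_tsum (x : ℝ≥0∞) : (∑' n : ℕ, if (n:ℝ≥0∞) < x then (1:ℝ≥0∞) else 0) ≤ x + 1 := by
  rw [ENNReal.tsum_eq_iSup_nat]
  exact iSup_le (tail_partial x)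

lemma tail_lint (M : MarkovChain S) (z : S) (V : (ℕ → S) → ℝ≥0∞) (hV : Measurable V) :
    ∑' n : ℕ, M.μ z {ω | (n:ℝ≥0∞) < V ω} ≤ (∫⁻ ω, V ω ∂ M.μ z) + 1 := by
  have hmeas : ∀ n : ℕ, MeasurableSet {ω : ℕ → S | (n:ℝ≥0∞) < V ω} :=
    fun n => measurableSet_lt measurable_const hV
  have h1 : ∀ n : ℕ, M.μ z {ω | (n:ℝ≥0∞) < V ω}
      = ∫⁻ ω, (if (n:ℝ≥0∞) < V ω then (1:ℝ≥0∞) else 0) ∂ M.μ z := by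
    intro n
    rw [← setLIntegral_one, ← lintegral_indicator (hmeas n)]
    refine lintegral_congr fun ω => ?_
    rw [Set.indicator_apply]
    rfl
  have h2 : ∀ n : ℕ, Measurable (fun ω : ℕ → S =>
      (if (n:ℝ≥0∞) < V ω then (1:ℝ≥0∞) else 0)) := by
    intro n
    have : (fun ω : ℕ → S => (if (n:ℝ≥0∞) < V ω then (1:ℝ≥0∞) else 0))
        = {ω : ℕ → S | (n:ℝ≥0∞) < V ω}.indicator (fun _ => 1) := by
      funext ω
      rw [Set.indicator_apply]
      rfl
    rw [this]
    exact measurable_const.indicator (hmeas n)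
  rw [tsum_congr h1, ← lintegral_tsum (fun n => (h2 n).aemeasurable)]
  calc ∫⁻ ω, (∑' n : ℕ, if (n:ℝ≥0∞) < V ω then (1:ℝ≥0∞) else 0) ∂ M.μ z
      ≤ ∫⁻ ω, (V ω + 1) ∂ M.μ z := lintegral_mono fun ω => tail_tsum (V ω)
    _ = (∫⁻ ω, V ω ∂ M.μ z) + 1 := by
        rw [lintegral_add_right _ measurable_const, lintegral_one, prob_univ]

section Avoid
variable (u : S → ℕ) (S0 : Set S) (m : ℕ) (y : S) (U : ℕ)

/-- The bounding functional. -/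
noncomputable def Fb : (ℕ → S) → ℝ≥0∞ :=
  fun ω => (U:ℝ≥0∞) * (K0fun u S0 ω + ∑' j : ℕ, incB u S0 m y j ω) + (m:ℝ≥0∞)

lemma measurable_Fb : Measurable (Fb u S0 m y U) := by
  refine Measurable.add ?_ measurable_const
  exact ((measurable_K0fun u S0).add
    (Measurable.ennreal_tsum (measurable_incB u S0 m y))).const_mul _

lemma avoid_sub_tail (huU : ∀ s, u s ≤ U) (hU1 : 1 ≤ U) (hm1 : 1 ≤ m) (n : ℕ) :
    {ω : ℕ → S | ∀ i, 1 ≤ i → i ≤ n → ω i ≠ y} ⊆ {ω | (n:ℝ≥0∞) < Fb u S0 m y U ω} := by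
  intro ω hA
  by_cases hsucc : ∃ j k, SuccT u S0 m y j k ω
  · have hex : ∃ j, ∃ k, SuccT u S0 m y j k ω := hsucc
    obtain ⟨k, hSk⟩ := Nat.find_spec hex
    have hmin : ∀ i < Nat.find hex, ¬ ∃ k', SuccT u S0 m y i k' ω :=
      fun i hi => Nat.find_min hex hi
    have hB : ω ∈ Bset u S0 m y (Nat.find hex) := by
      intro i hi
      obtain ⟨ki, hki, -⟩ := trial_chain u S0 m hSk.1 i hi
      exact ⟨ki, hki, fun i' hi1 him hhit => hmin i hi ⟨ki, hki, i', hi1, him, hhit⟩⟩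
    have htel := telescope u S0 m y (Nat.find hex) k hSk.1 hB
    have hn : n < U * k + m := by
      by_contra hc
      push_neg at hc
      obtain ⟨hT, i, hi1, him, hhit⟩ := hSk
      have hσ := sigmaT_le_mul huU ω k
      exact hA (sigmaT u ω k + i) (by omega) (by omega) hhit
    show (n:ℝ≥0∞) < _
    calc (n:ℝ≥0∞) < ((U * k + m : ℕ) : ℝ≥0∞) := by exact_mod_cast hn
      _ = (U:ℝ≥0∞) * (k:ℝ≥0∞) + (m:ℝ≥0∞) := by push_cast; ring
      _ ≤ Fb u S0 m y U ω := by
          refine add_le_add_left (mul_le_mul_right ?_ _) _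
          refine le_trans htel (add_le_add_right ?_ _)
          exact ENNReal.sum_le_tsum _
  · show (n:ℝ≥0∞) < Fb u S0 m y U ω
    rw [Fb, nosucc_top u S0 m y hm1 hsucc, ENNReal.mul_top
      (by
        simp only [ne_eq, Nat.cast_eq_zero]
        omega : (U:ℝ≥0∞) ≠ 0), top_add]
    exact ENNReal.natCast_lt_top n

end Avoid
end FosterProof
open FosterProof MeasureTheory ENNReal in
/-- generalized Foster criterion with bounded state-dependent
sampling times. -/
theorem foster_embedded_criterion
    {S : Type} [MeasurableSpace S] [MeasurableSingletonClass S] [Countable S]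
    (M : MarkovChain S) (hirr : MCIrreducible M)
    (u : S → ℕ) (hu1 : ∀ y, 1 ≤ u y) (U : ℕ) (huU : ∀ y, u y ≤ U)
    (f : S → ℝ) (hlb : BddBelow (Set.range f))
    (δ : ℝ) (hδ : 0 < δ) (S0 : Set S) (hS0 : S0.Finite)
    (hint : ∀ y ∉ S0,
      Integrable (fun ω => f (ω (sigmaT u ω 1)) - f (ω (sigmaT u ω 0))) (M.μ y))
    (hdrift : ∀ y ∉ S0,
      ∫ ω, (f (ω (sigmaT u ω 1)) - f (ω (sigmaT u ω 0))) ∂ M.μ y ≤ -δ)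
    (hfin : ∀ y ∈ S0, Integrable (fun ω => f (ω (sigmaT u ω 1))) (M.μ y)) :
    PositiveRecurrent M := by
  intro y
  classical
  obtain ⟨c, hc⟩ := hlb
  have hcf : ∀ s, c ≤ f s := fun s => hc (Set.mem_range_self s)
  set G : S → ℝ≥0∞ := fun s => ENNReal.ofReal (f s - c) with hGdef
  have hG : ∀ s, G s ≠ ⊤ := fun s => ENNReal.ofReal_ne_top
  set δ' : ℝ≥0∞ := ENNReal.ofReal δ with hδ'def
  have hδ0 : δ' ≠ 0 := (ENNReal.ofReal_pos.2 hδ).ne'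
  have hδt : δ' ≠ ⊤ := ENNReal.ofReal_ne_top
  -- a.e. identification of the first sampling time
  have hae : ∀ t : S, (fun ω : ℕ → S => f (ω (sigmaT u ω 1)))
      =ᵐ[M.μ t] (fun ω => f (ω (u t))) := by
    intro t
    refine (ae0 M t).mono fun ω h => ?_
    show f (ω (sigmaT u ω 1)) = f (ω (u t))
    have hs : sigmaT u ω 1 = u t := by
      rw [sigmaT_succ, sigmaT_zero, Nat.zero_add, h]
    rw [hs]
  have h0ae : ∀ t : S, (fun ω : ℕ → S => f (ω (sigmaT u ω 0)))
      =ᵐ[M.μ t] (fun _ => f t) := by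
    intro t
    refine (ae0 M t).mono fun ω h => ?_
    show f (ω 0) = f t
    rw [h]
  have hint2 : ∀ t ∉ S0, Integrable (fun ω : ℕ → S => f (ω (u t))) (M.μ t) := by
    intro t ht
    have := M.isProb t
    have h2 := hint t ht
    have h0int : Integrable (fun ω : ℕ → S => f (ω (sigmaT u ω 0))) (M.μ t) :=
      (integrable_const (f t)).congr (h0ae t).symm
    have h3 : Integrable (fun ω : ℕ → S => f (ω (sigmaT u ω 1))) (M.μ t) := by
      have h4 := h2.add h0int
      refine h4.congr (Filter.Eventually.of_forall fun ω => ?_)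
      show f (ω (sigmaT u ω 1)) - f (ω (sigmaT u ω 0)) + f (ω (sigmaT u ω 0))
        = f (ω (sigmaT u ω 1))
      ring
    exact h3.congr (hae t)
  have hintS0 : ∀ t ∈ S0, Integrable (fun ω : ℕ → S => f (ω (u t))) (M.μ t) := by
    intro t ht
    have := M.isProb t
    exact (hfin t ht).congr (hae t)
  have hdrift2 : ∀ t ∉ S0, ∫ ω, f (ω (u t)) ∂ M.μ t ≤ f t - δ := by
    intro t ht
    have := M.isProb t
    have h1 := hdrift t ht
    have hcongr : (fun ω : ℕ → S => f (ω (sigmaT u ω 1)) - f (ω (sigmaT u ω 0)))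
        =ᵐ[M.μ t] (fun ω => f (ω (u t)) - f t) := by
      filter_upwards [hae t, h0ae t] with ω hω1 hω0
      show f (ω (sigmaT u ω 1)) - f (ω (sigmaT u ω 0)) = f (ω (u t)) - f t
      rw [hω1, hω0]
    rw [integral_congr_ae hcongr, integral_sub (hint2 t ht) (integrable_const _),
      integral_const] at h1
    simp only [Measure.real, measure_univ, ENNReal.toReal_one, one_smul, smul_eq_mul, one_mul] at h1
    linarith
  -- lintegral identification
  have hlintf : ∀ t : S, Integrable (fun ω : ℕ → S => f (ω (u t))) (M.μ t) →
      (∫⁻ ω, G (ω (u t)) ∂ M.μ t)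
        = ENNReal.ofReal (∫ ω, (f (ω (u t)) - c) ∂ M.μ t) := by
    intro t hI
    have := M.isProb t
    have hgint : Integrable (fun ω : ℕ → S => f (ω (u t)) - c) (M.μ t) :=
      hI.sub (integrable_const c)
    rw [ofReal_integral_eq_lintegral_ofReal hgint
      (Filter.Eventually.of_forall fun ω => sub_nonneg.2 (hcf _))]
  have HK1 : ∀ t, t ∉ S0 → (∫⁻ ω, G (ω (u t)) ∂ M.μ t) + δ' ≤ G t := by
    intro t ht
    have := M.isProb t
    have hIval : ∫ ω, (f (ω (u t)) - c) ∂ M.μ t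
        = (∫ ω, f (ω (u t)) ∂ M.μ t) - c := by
      rw [integral_sub (hint2 t ht) (integrable_const _), integral_const]
      simp
    have hnn : 0 ≤ ∫ ω, (f (ω (u t)) - c) ∂ M.μ t :=
      integral_nonneg fun ω => sub_nonneg.2 (hcf _)
    have hle : ∫ ω, (f (ω (u t)) - c) ∂ M.μ t ≤ (f t - c) - δ := by
      rw [hIval]
      linarith [hdrift2 t ht]
    have hsub : 0 ≤ (f t - c) - δ := le_trans hnn hle
    rw [hlintf t (hint2 t ht)]
    calc ENNReal.ofReal (∫ ω, (f (ω (u t)) - c) ∂ M.μ t) + δ'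
        ≤ ENNReal.ofReal ((f t - c) - δ) + ENNReal.ofReal δ :=
          add_le_add_left (ENNReal.ofReal_le_ofReal hle) _
      _ = ENNReal.ofReal ((f t - c) - δ + δ) := (ENNReal.ofReal_add hsub hδ.le).symm
      _ = G t := congrArg ENNReal.ofReal (by ring)
  have HK2 : ∀ t ∈ S0, (∫⁻ ω, G (ω (u t)) ∂ M.μ t) ≠ ⊤ := by
    intro t ht
    rw [hlintf t (hintS0 t ht)]
    exact ENNReal.ofReal_ne_top
  -- constants
  set C0 := (hS0.toFinset).sup (fun t => ∫⁻ ω, G (ω (u t)) ∂ M.μ t) with hC0def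
  have HC0 : ∀ t, t ∈ S0 → (∫⁻ ω, G (ω (u t)) ∂ M.μ t) ≤ C0 := fun t ht =>
    Finset.le_sup (f := fun t => ∫⁻ ω, G (ω (u t)) ∂ M.μ t) (hS0.mem_toFinset.2 ht)
  have hC0top : C0 ≠ ⊤ := by
    rw [← lt_top_iff_ne_top, hC0def, Finset.sup_lt_iff (by simp : (⊥:ℝ≥0∞) < ⊤)]
    intro t ht
    exact lt_top_iff_ne_top.2 (HK2 t (hS0.mem_toFinset.1 ht))
  set Gb := (hS0.toFinset).sup G with hGbdef
  have hGb : ∀ t ∈ S0, G t ≤ Gb := fun t ht => Finset.le_sup (hS0.mem_toFinset.2 ht)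
  have hGbtop : Gb ≠ ⊤ := by
    rw [← lt_top_iff_ne_top, hGbdef, Finset.sup_lt_iff (by simp : (⊥:ℝ≥0∞) < ⊤)]
    exact fun t _ => lt_top_iff_ne_top.2 (hG t)
  have HK1w : ∀ t, t ∉ S0 → (∫⁻ ω, G (ω (u t)) ∂ M.μ t) ≤ G t :=
    fun t ht => le_trans le_self_add (HK1 t ht)
  have HTL : ∀ t : S, ∑' r : ℕ, M.μ t (RR u S0 (r+1)) ≤ G t * δ'⁻¹ := by
    intro t
    have h := TL_bound M u S0 G δ' hG HK1 hδ0 hδt t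
    rwa [ENNReal.div_eq_inv_mul, mul_comm] at h
  have hGit : ∀ (t : S) (r : ℕ), (∫⁻ ω, G (emb u ω r) ∂ M.μ t) ≤ G t + r * C0 :=
    fun t r => G_iter M u S0 G hG HK1w C0 HC0 t r
  -- trial length and failure bound
  choose K hK1 hK2 using fun s => exists_pos_hit M hirr s y
  set m := max 1 ((hS0.toFinset).sup K) with hmdef
  have hm1 : 1 ≤ m := le_max_left _ _
  have hKm : ∀ s ∈ S0, K s ≤ m := fun s hs =>
    le_trans (Finset.le_sup (hS0.mem_toFinset.2 hs)) (le_max_right _ _)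
  set β := (hS0.toFinset).sup (fun s => M.μ s (FailW m y)) with hβdef
  have hβ : ∀ s ∈ S0, M.μ s (FailW m y) ≤ β := fun s hs =>
    Finset.le_sup (f := fun s => M.μ s (FailW m y)) (hS0.mem_toFinset.2 hs)
  have hβ1 : β < 1 := by
    rw [hβdef, Finset.sup_lt_iff (by norm_num : (⊥:ℝ≥0∞) < 1)]
    intro s hs
    have := M.isProb s
    have hsub : FailW m y ⊆ {ω : ℕ → S | ω (K s) = y}ᶜ := by
      intro ω hω
      exact hω (K s) (hK1 s) (hKm s (hS0.mem_toFinset.1 hs))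
    calc M.μ s (FailW m y) ≤ M.μ s {ω : ℕ → S | ω (K s) = y}ᶜ := measure_mono hsub
      _ = 1 - M.μ s {ω : ℕ → S | ω (K s) = y} := by
          rw [measure_compl (depOn_coord (K s) y).measurableSet (measure_ne_top _ _),
            prob_univ]
      _ < 1 := ENNReal.sub_lt_self one_ne_top one_ne_zero (hK2 s).ne'
  have hβne : (1:ℝ≥0∞) - β ≠ 0 := by
    rw [ne_eq, tsub_eq_zero_iff_le]
    exact not_le.2 hβ1
  have hBg : ∀ j : ℕ, M.μ y (Bset u S0 m y j) ≤ β ^ j :=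
    fun j => Bset_geom M u S0 m y β hu1 hβ y j
  have := M.isProb y
  -- expectations
  have hEK0 : ∫⁻ ω, K0fun u S0 ω ∂ M.μ y ≤ G y * δ'⁻¹ := by
    calc ∫⁻ ω, K0fun u S0 ω ∂ M.μ y
        = ∑' k : ℕ, ∫⁻ ω, (RR u S0 (k+1)).indicator (fun _ => (1:ℝ≥0∞)) ω ∂ M.μ y := by
          rw [← lintegral_tsum (fun k =>
            (measurable_const.indicator (measurable_RR u S0 (k+1))).aemeasurable)]
          rfl
      _ = ∑' k : ℕ, M.μ y (RR u S0 (k+1)) := tsum_congr fun k => by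
          rw [lintegral_indicator (measurable_RR u S0 (k+1)), setLIntegral_one]
      _ ≤ G y * δ'⁻¹ := HTL y
  set Dc : ℝ≥0∞ := (m:ℝ≥0∞) + (Gb + m * C0) * δ'⁻¹ with hDcdef
  have hEinc : ∀ j : ℕ, ∫⁻ ω, incB u S0 m y j ω ∂ M.μ y ≤ β ^ j * Dc := by
    intro j
    have h1 : ∫⁻ ω, incB u S0 m y j ω ∂ M.μ y
        = (m:ℝ≥0∞) * M.μ y (Bset u S0 m y (j+1))
          + ∑' r : ℕ, M.μ y (Dset u S0 m y j r) := by
      simp only [incB]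
      rw [lintegral_add_left
        ((measurable_const.indicator (measurable_Bset u S0 m y (j+1))).const_mul _)]
      rw [lintegral_const_mul _
        (measurable_const.indicator (measurable_Bset u S0 m y (j+1)))]
      rw [lintegral_indicator (measurable_Bset u S0 m y (j+1)), setLIntegral_one]
      rw [lintegral_tsum (fun r =>
        (measurable_const.indicator (measurable_Dset u S0 m y j r)).aemeasurable)]
      congr 1
      exact tsum_congr fun r => by
        rw [lintegral_indicator (measurable_Dset u S0 m y j r), setLIntegral_one]
    rw [h1]
    have h2 : (m:ℝ≥0∞) * M.μ y (Bset u S0 m y (j+1)) ≤ (m:ℝ≥0∞) * β ^ j := by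
      refine mul_le_mul_right (le_trans (hBg (j+1)) ?_) _
      calc β ^ (j+1) = β ^ j * β := pow_succ β j
        _ ≤ β ^ j * 1 := mul_le_mul_right hβ1.le _
        _ = β ^ j := mul_one _
    have h3 := Dsum_bound M u S0 m y G δ' β C0 Gb hu1 HTL hGit hGb y j (hBg j)
    calc (m:ℝ≥0∞) * M.μ y (Bset u S0 m y (j+1))
          + ∑' r : ℕ, M.μ y (Dset u S0 m y j r)
        ≤ (m:ℝ≥0∞) * β ^ j + β ^ j * ((Gb + m * C0) * δ'⁻¹) := add_le_add h2 h3
      _ = β ^ j * Dc := by rw [hDcdef]; ring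
  have hEincsum : ∑' j : ℕ, ∫⁻ ω, incB u S0 m y j ω ∂ M.μ y ≤ (1 - β)⁻¹ * Dc := by
    calc ∑' j : ℕ, ∫⁻ ω, incB u S0 m y j ω ∂ M.μ y
        ≤ ∑' j : ℕ, β ^ j * Dc := ENNReal.tsum_le_tsum hEinc
      _ = (∑' j : ℕ, β ^ j) * Dc := ENNReal.tsum_mul_right
      _ = (1 - β)⁻¹ * Dc := by rw [ENNReal.tsum_geometric]
  have hU1 : 1 ≤ U := le_trans (hu1 y) (huU y)
  have hFb : ∫⁻ ω, Fb u S0 m y U ω ∂ M.μ y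
      = (U:ℝ≥0∞) * ((∫⁻ ω, K0fun u S0 ω ∂ M.μ y)
          + ∑' j : ℕ, ∫⁻ ω, incB u S0 m y j ω ∂ M.μ y) + (m:ℝ≥0∞) := by
    simp only [Fb]
    rw [lintegral_add_right _ measurable_const, lintegral_const, prob_univ, mul_one]
    rw [lintegral_const_mul (f := fun ω => K0fun u S0 ω + ∑' j : ℕ, incB u S0 m y j ω) _
      ((measurable_K0fun u S0).add
      (Measurable.ennreal_tsum (measurable_incB u S0 m y)))]
    rw [lintegral_add_left (measurable_K0fun u S0)]
    rw [lintegral_tsum (fun j => (measurable_incB u S0 m y j).aemeasurable)]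
  have hchain : (∑' n : ℕ, M.μ y {ω | ∀ i, 1 ≤ i → i ≤ n → ω i ≠ y})
      ≤ (∫⁻ ω, Fb u S0 m y U ω ∂ M.μ y) + 1 := by
    refine le_trans (ENNReal.tsum_le_tsum fun n =>
      measure_mono (avoid_sub_tail u S0 m y U huU hU1 hm1 n)) ?_
    exact tail_lint M y _ (measurable_Fb u S0 m y U)
  refine ne_top_of_le_ne_top ?_ hchain
  rw [hFb]
  have h1 : (∫⁻ ω, K0fun u S0 ω ∂ M.μ y)
      + ∑' j : ℕ, ∫⁻ ω, incB u S0 m y j ω ∂ M.μ y ≠ ⊤ := by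
    apply ENNReal.add_ne_top.2
    constructor
    · exact ne_top_of_le_ne_top
        (ENNReal.mul_ne_top (hG y) (ENNReal.inv_ne_top.2 hδ0)) hEK0
    · refine ne_top_of_le_ne_top ?_ hEincsum
      refine ENNReal.mul_ne_top (ENNReal.inv_ne_top.2 hβne) ?_
      rw [hDcdef]
      refine ENNReal.add_ne_top.2 ⟨ENNReal.natCast_ne_top m, ?_⟩
      exact ENNReal.mul_ne_top
        (ENNReal.add_ne_top.2 ⟨hGbtop,
          ENNReal.mul_ne_top (ENNReal.natCast_ne_top m) hC0top⟩)
        (ENNReal.inv_ne_top.2 hδ0)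
  exact ENNReal.add_ne_top.2 ⟨ENNReal.add_ne_top.2
    ⟨ENNReal.mul_ne_top (ENNReal.natCast_ne_top U) h1, ENNReal.natCast_ne_top m⟩,
    one_ne_top⟩
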